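/- arXiv:1806.01035 — 5 statements merged into one kernel-verified Lean document; each statement's English description precedes it below -/
import Mathlib

section
/- (Theorem 1) Let M ≥ 1 and K ≥ 1 be integers, let ρ > 0, and let s < 1 be real. Let X_(1) be the minimum of K i.i.d. Gamma(M,1) random variables. Then E[(1+ρX_(1))^{s−1}] = 1 + (s−1) Σ_{(k_1,…,k_M)} φ · Γ(1+ϑ) · ρ^{−ϑ} · Ψ(ϑ+1; ϑ+s; K/ρ), where the sum is over all M-tuples of nonnegative integers with k_1 + ⋯ + k_M = K, φ = (K!/(k_1!⋯k_M!)) / ∏_{n=0}^{M−1} (n!)^{k_{n+1}}, ϑ = Σ_{ℓ=0}^{M−1} ℓ·k_{ℓ+1}, and Ψ is Tricomi's confluent hypergeometric function of the second kind, given for a > 0, z > 0 by its integral representation Ψ(a;b;z) = (1/Γ(a)) ∫_0^∞ e^{−zt} t^{a−1} (1+t)^{b−a−1} dt. -/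
open MeasureTheory ProbabilityTheory Real
open Set Filter Topology

/-- Tricomi's confluent hypergeometric function of the second kind, via its integral
representation `Ψ(a;b;z) = (1/Γ(a)) ∫_0^∞ e^(-zt) t^(a-1) (1+t)^(b-a-1) dt` (valid for
`a > 0`, `z > 0`). -/
noncomputable def tricomiU (a b z : ℝ) : ℝ :=
  (1 / Real.Gamma a) * ∫ t in Set.Ioi (0 : ℝ),
    Real.exp (-(z * t)) * t ^ (a - 1) * (1 + t) ^ (b - a - 1)

lemma hasDerivAt_survival (m : ℕ) (u : ℝ) :
    HasDerivAt (fun x : ℝ => Real.exp (-x) * ∑ n ∈ Finset.range (m+1), x ^ n / n.factorial)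
      (-(u ^ m * Real.exp (-u) / m.factorial)) u := by
  have hP : HasDerivAt (fun x : ℝ => ∑ n ∈ Finset.range (m+1), x ^ n / n.factorial)
      (∑ n ∈ Finset.range m, u ^ n / n.factorial) u := by
    have h1 : HasDerivAt (fun x : ℝ => ∑ n ∈ Finset.range (m+1), x ^ n / n.factorial)
        (∑ n ∈ Finset.range (m+1), ((n : ℝ) * u ^ (n-1) / n.factorial)) u :=
      HasDerivAt.fun_sum fun n _ => ((hasDerivAt_pow n u).div_const _)
    convert h1 using 1
    rw [Finset.sum_range_succ']
    simp only [Nat.cast_zero, zero_mul, Nat.factorial_zero, Nat.cast_one, zero_div, add_zero]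
    refine (Finset.sum_congr rfl fun i _ => ?_)
    have : ((i+1).factorial : ℝ) = (i+1) * i.factorial := by
      push_cast [Nat.factorial_succ]; ring
    rw [this]
    have h2 : ((i : ℝ) + 1) ≠ 0 := by positivity
    have h3 : (i.factorial : ℝ) ≠ 0 := by positivity
    field_simp
    simp only [Nat.add_sub_cancel, Nat.add_sub_cancel_left]; push_cast; ring
  have hE : HasDerivAt (fun x : ℝ => Real.exp (-x)) (-Real.exp (-u)) u := by
    exact ((Real.hasDerivAt_exp (-u)).comp u (hasDerivAt_neg u)).congr_deriv (by ring)
  have h := hE.mul hP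
  refine h.congr_deriv ?_
  rw [Finset.sum_range_succ]
  ring

lemma integrableOn_pow_mul_exp_neg_mul {n : ℕ} {b : ℝ} (hb : 0 < b) :
    IntegrableOn (fun x : ℝ => x ^ n * Real.exp (-(b * x))) (Ioi 0) := by
  have h := integrableOn_rpow_mul_exp_neg_mul_rpow (s := (n : ℝ)) (p := 1) (b := b)
      (by exact_mod_cast neg_one_lt_zero.trans_le (Nat.cast_nonneg n)) zero_lt_one hb
  refine h.congr_fun (fun x hx => ?_) measurableSet_Ioi
  simp only [Real.rpow_one, Real.rpow_natCast]
  ring_nf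

lemma survival_tendsto (m : ℕ) :
    Tendsto (fun x : ℝ => -(Real.exp (-x) * ∑ n ∈ Finset.range (m+1), x ^ n / n.factorial))
      atTop (𝓝 0) := by
  have : Tendsto (fun x : ℝ => Real.exp (-x) * ∑ n ∈ Finset.range (m+1), x ^ n / n.factorial)
      atTop (𝓝 0) := by
    have h : ∀ x : ℝ, Real.exp (-x) * ∑ n ∈ Finset.range (m+1), x ^ n / n.factorial
        = ∑ n ∈ Finset.range (m+1), (x ^ n * Real.exp (-x)) / n.factorial := by
      intro x; rw [Finset.mul_sum]; refine Finset.sum_congr rfl fun n _ => ?_; ring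
    simp_rw [h]
    have h0 : (0:ℝ) = ∑ n ∈ Finset.range (m+1), (0:ℝ) / n.factorial := by simp
    rw [h0]
    exact tendsto_finset_sum _ fun n _ =>
      ((tendsto_pow_mul_exp_neg_atTop_nhds_zero n).div_const _)
  simpa using this.neg

lemma gammaMeasure_Ioi (m : ℕ) {u : ℝ} (hu : 0 ≤ u) :
    gammaMeasure (m+1 : ℕ) 1 (Ioi u)
      = ENNReal.ofReal (Real.exp (-u) * ∑ n ∈ Finset.range (m+1), u ^ n / n.factorial) := by
  have hpdf : ∀ t ∈ Ioi u, gammaPDF ((m:ℝ)+1) 1 t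
      = ENNReal.ofReal (t ^ m * Real.exp (-t) / m.factorial) := by
    intro t ht
    have ht0 : 0 ≤ t := le_of_lt (lt_of_le_of_lt hu ht)
    rw [gammaPDF_of_nonneg ht0]
    congr 1
    rw [Real.Gamma_nat_eq_factorial, Real.one_rpow]
    have : t ^ ((m:ℝ) + 1 - 1) = t ^ m := by
      rw [add_sub_cancel_right, Real.rpow_natCast]
    rw [this]
    ring
  have hInt : IntegrableOn (fun t : ℝ => t ^ m * Real.exp (-t) / m.factorial) (Ioi u) := by
    have h1 : IntegrableOn (fun x : ℝ => x ^ m * Real.exp (-(1 * x))) (Ioi 0) :=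
      integrableOn_pow_mul_exp_neg_mul one_pos
    have h2 := (h1.mono_set (Ioi_subset_Ioi hu)).div_const (m.factorial : ℝ)
    simp only [one_mul] at h2; exact h2
  have hDeriv : ∀ t ∈ Ioi u, HasDerivAt
      (fun x : ℝ => -(Real.exp (-x) * ∑ n ∈ Finset.range (m+1), x ^ n / n.factorial))
      (t ^ m * Real.exp (-t) / m.factorial) t := by
    intro t _
    exact (hasDerivAt_survival m t).neg.congr_deriv (neg_neg _)
  have hCont : ContinuousWithinAt
      (fun x : ℝ => -(Real.exp (-x) * ∑ n ∈ Finset.range (m+1), x ^ n / n.factorial))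
      (Ici u) u :=
    (Continuous.continuousWithinAt (by fun_prop))
  have hKey : ∫ t in Ioi u, t ^ m * Real.exp (-t) / m.factorial
      = Real.exp (-u) * ∑ n ∈ Finset.range (m+1), u ^ n / n.factorial := by
    have := integral_Ioi_of_hasDerivAt_of_tendsto hCont hDeriv hInt (survival_tendsto m)
    rw [this]; ring
  have hM : ((m+1 : ℕ) : ℝ) = (m : ℝ) + 1 := by push_cast; ring
  rw [gammaMeasure, withDensity_apply _ measurableSet_Ioi, hM,
    setLIntegral_congr_fun measurableSet_Ioi hpdf, ← hKey,
    ← ofReal_integral_eq_lintegral_ofReal hInt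
      ((ae_restrict_iff' measurableSet_Ioi).2 (ae_of_all _ fun t ht => by
        have ht0 : (0:ℝ) ≤ t := le_of_lt (lt_of_le_of_lt hu ht)
        positivity))]

section H
variable {ρ s : ℝ} (hρ : 0 < ρ) (hs : s < 1)

lemma continuous_hfun (hρ : 0 < ρ) : Continuous (fun t : ℝ => (1-s) * ρ * (1 + ρ * |t|) ^ (s-2)) := by
  have hb : ∀ t : ℝ, (0:ℝ) < 1 + ρ * |t| := fun t => by positivity
  exact continuous_const.mul ((continuous_const.add
    (continuous_const.mul continuous_abs)).rpow_const (fun t => Or.inl (hb t).ne'))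

lemma hasDerivAt_negrpow {x : ℝ} (hx : 0 ≤ x) (hρ : 0 < ρ) :
    HasDerivAt (fun y : ℝ => -((1 + ρ * y) ^ (s-1))) ((1-s) * ρ * (1 + ρ * x) ^ (s-2)) x := by
  have hbase : (0:ℝ) < 1 + ρ * x := by positivity
  have h1 : HasDerivAt (fun y : ℝ => 1 + ρ * y) ρ x := by
    simpa using ((hasDerivAt_id x).const_mul ρ).const_add 1
  have h2 := (Real.hasDerivAt_rpow_const (x := 1 + ρ * x) (p := s - 1)
    (Or.inl hbase.ne')).comp x h1
  have h3 := h2.neg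
  refine h3.congr_deriv ?_
  have : s - 1 - 1 = s - 2 := by ring
  rw [this]; ring

lemma ftc_h {y : ℝ} (hy : 0 ≤ y) (hρ : 0 < ρ) (hs : s < 1) :
    ∫ t in (0:ℝ)..y, (1-s) * ρ * (1 + ρ * |t|) ^ (s-2) = 1 - (1 + ρ * y) ^ (s-1) := by
  have habs : ∀ t ∈ Set.uIcc (0:ℝ) y, (1-s) * ρ * (1 + ρ * |t|) ^ (s-2)
      = (1-s) * ρ * (1 + ρ * t) ^ (s-2) := by
    intro t ht
    rw [Set.uIcc_of_le hy] at ht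
    rw [abs_of_nonneg ht.1]
  rw [intervalIntegral.integral_congr habs]
  have := intervalIntegral.integral_eq_sub_of_hasDerivAt (a := 0) (b := y)
    (f := fun y : ℝ => -((1 + ρ * y) ^ (s-1)))
    (f' := fun x : ℝ => (1-s) * ρ * (1 + ρ * x) ^ (s-2))
    (fun x hx => by
      rw [Set.uIcc_of_le hy] at hx
      exact hasDerivAt_negrpow hx.1 hρ)
    (by
      apply ContinuousOn.intervalIntegrable
      apply ContinuousOn.mul continuousOn_const
      apply ContinuousOn.rpow_const
      · fun_prop
      · intro x hx
        rw [Set.uIcc_of_le hy] at hx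
        have : (0:ℝ) < 1 + ρ * x := by nlinarith [hx.1]
        exact Or.inl this.ne')
  rw [this]
  norm_num
  try ring

lemma integrableOn_h (hρ : 0 < ρ) (hs : s < 1) :
    IntegrableOn (fun t : ℝ => (1-s) * ρ * (1 + ρ * |t|) ^ (s-2)) (Ioi 0) := by
  have key : IntegrableOn (fun t : ℝ => (1-s) * ρ * (1 + ρ * t) ^ (s-2)) (Ioi 0) := by
    refine integrableOn_Ioi_deriv_of_nonneg (g := fun y : ℝ => -((1 + ρ * y) ^ (s-1)))
      ?_ (fun x hx => hasDerivAt_negrpow (le_of_lt hx) hρ) ?_ (l := 0) ?_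
    · apply ContinuousAt.continuousWithinAt
      apply ContinuousAt.neg
      have hb : ContinuousAt (fun y : ℝ => 1 + ρ * y) 0 := by fun_prop
      have hr : ContinuousAt (fun x : ℝ => x ^ (s-1)) (1 + ρ * 0) := by
        apply Real.continuousAt_rpow_const
        norm_num
      exact ContinuousAt.comp (g := fun x : ℝ => x ^ (s-1)) (f := fun y : ℝ => 1 + ρ * y) hr hb
    · intro x hx
      have : (0:ℝ) < 1 + ρ * x := by nlinarith [le_of_lt (show (0:ℝ) < x from hx)]
      have h2 : (0:ℝ) < (1 + ρ * x) ^ (s-2) := Real.rpow_pos_of_pos this _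
      exact mul_nonneg (mul_nonneg (by linarith) hρ.le) h2.le
    · have h1 : Tendsto (fun y : ℝ => 1 + ρ * y) atTop atTop :=
        tendsto_atTop_add_const_left _ _ (tendsto_id.const_mul_atTop hρ)
      have h2 := (tendsto_rpow_neg_atTop (y := 1 - s) (by linarith)).comp h1
      have : Tendsto (fun y : ℝ => (1 + ρ * y) ^ (s-1)) atTop (𝓝 0) := by
        refine h2.congr fun y => ?_
        simp only [Function.comp_apply]
        rw [neg_sub]
      simpa using this.neg
  refine key.congr_fun (fun t ht => ?_) measurableSet_Ioi
  rw [abs_of_nonneg (le_of_lt ht)]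


lemma multinomial_expand (m K : ℕ) (u : ℝ) :
    (∑ n ∈ Finset.range (m+1), u ^ n / n.factorial) ^ K
      = ∑ k ∈ Finset.Nat.antidiagonalTuple (m+1) K,
          ((Nat.multinomial Finset.univ k : ℝ)
            / ∏ i : Fin (m+1), ((Nat.factorial (i : ℕ) : ℝ)) ^ (k i))
          * u ^ (∑ i : Fin (m+1), (i : ℕ) * k i) := by
  rw [← Fin.sum_univ_eq_sum_range (fun n => u ^ n / (n.factorial : ℝ)) (m+1)]
  rw [Finset.sum_pow_eq_sum_piAntidiag Finset.univ _ K,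
    Finset.piAntidiag_univ_fin_eq_antidiagonalTuple K (m+1)]
  refine Finset.sum_congr rfl fun k _ => ?_
  have h1 : ∀ i : Fin (m+1), (u ^ (i:ℕ) / (((i:ℕ).factorial : ℝ))) ^ (k i)
      = u ^ ((i:ℕ) * k i) / (((i:ℕ).factorial : ℝ)) ^ (k i) := fun i => by
    rw [div_pow, pow_mul]
  rw [Finset.prod_congr rfl (fun i _ => h1 i), Finset.prod_div_distrib,
    Finset.prod_pow_eq_pow_sum]
  ring

lemma term_integrable {ρ s : ℝ} (hρ : 0 < ρ) (hs : s < 1) {b : ℝ} (hb : 0 < b) (n : ℕ) :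
    IntegrableOn (fun u : ℝ => Real.exp (-(b*u)) * u ^ n * (1 + ρ * u) ^ (s-2)) (Ioi 0) := by
  have hdom : IntegrableOn (fun u : ℝ => u ^ n * Real.exp (-(b*u))) (Ioi 0) :=
    integrableOn_pow_mul_exp_neg_mul hb
  refine Integrable.mono' hdom ?_ ?_
  · apply ContinuousOn.aestronglyMeasurable ?_ measurableSet_Ioi
    apply ContinuousOn.mul
    · fun_prop
    · apply ContinuousOn.rpow_const (by fun_prop)
      intro x hx
      have hx0 : (0:ℝ) < x := hx
      have : (0:ℝ) < 1 + ρ * x := by positivity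
      exact Or.inl this.ne'
  · refine (ae_restrict_iff' measurableSet_Ioi).2 (ae_of_all _ fun u hu => ?_)
    have hu0 : (0:ℝ) < u := hu
    have h1 : (0:ℝ) < 1 + ρ * u := by positivity
    have h2 : (1 + ρ * u) ^ (s-2) ≤ 1 :=
      Real.rpow_le_one_of_one_le_of_nonpos (by nlinarith) (by linarith)
    have h3 : (0:ℝ) < (1 + ρ * u) ^ (s-2) := Real.rpow_pos_of_pos h1 _
    rw [Real.norm_eq_abs, abs_of_nonneg (by positivity)]
    calc Real.exp (-(b*u)) * u ^ n * (1 + ρ * u) ^ (s-2)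
        ≤ Real.exp (-(b*u)) * u ^ n * 1 := by
          apply mul_le_mul_of_nonneg_left h2 (by positivity)
      _ = u ^ n * Real.exp (-(b*u)) := by ring

lemma tricomi_eval {ρ s : ℝ} (hρ : 0 < ρ) (hs : s < 1) {Kr : ℝ} (hK : 0 < Kr) (n : ℕ) :
    tricomiU ((n : ℝ) + 1) ((n : ℝ) + s) (Kr / ρ)
      = (1 / Real.Gamma ((n : ℝ) + 1)) * (ρ ^ (n + 1)
          * ∫ u in Ioi (0:ℝ), Real.exp (-(Kr*u)) * u ^ n * (1 + ρ * u) ^ (s-2)) := by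
  rw [tricomiU]
  congr 1
  have he1 : ((n:ℝ) + 1 - 1) = (n:ℝ) := by ring
  have he2 : ((n:ℝ) + s - ((n:ℝ)+1) - 1) = s - 2 := by ring
  rw [he1, he2]
  have key := MeasureTheory.integral_comp_mul_left_Ioi
    (g := fun t : ℝ => Real.exp (-(Kr/ρ * t)) * t ^ ((n:ℝ)) * (1 + t) ^ (s-2)) 0 hρ
  simp only [mul_zero, smul_eq_mul] at key
  have key2 : ρ^n * ∫ u in Ioi (0:ℝ), Real.exp (-(Kr*u)) * u ^ n * (1 + ρ*u) ^ (s-2)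
      = ρ⁻¹ * ∫ t in Ioi (0:ℝ), Real.exp (-(Kr/ρ*t)) * t ^ ((n:ℝ)) * (1+t) ^ (s-2) := by
    rw [← key, ← integral_const_mul]
    refine setIntegral_congr_fun measurableSet_Ioi (fun u _ => ?_)
    have harg : Kr / ρ * (ρ * u) = Kr * u := by field_simp
    rw [Real.rpow_natCast, harg, mul_pow]
    ring
  have h5 : ρ * (ρ^n * ∫ u in Ioi (0:ℝ), Real.exp (-(Kr*u)) * u ^ n * (1 + ρ*u) ^ (s-2))
      = ∫ t in Ioi (0:ℝ), Real.exp (-(Kr/ρ*t)) * t ^ ((n:ℝ)) * (1+t) ^ (s-2) := by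
    rw [key2, ← mul_assoc, mul_inv_cancel₀ hρ.ne', one_mul]
  rw [← h5]
  ring

lemma term_eval {ρ s : ℝ} (hρ : 0 < ρ) (hs : s < 1) {Kr : ℝ} (hK : 0 < Kr) (n : ℕ) (C : ℝ) :
    C * Real.Gamma (1 + (n:ℝ)) / ρ ^ n * tricomiU ((n:ℝ)+1) ((n:ℝ)+s) (Kr/ρ)
      = C * (ρ * ∫ u in Ioi (0:ℝ), Real.exp (-(Kr*u)) * u ^ n * (1+ρ*u)^(s-2)) := by
  rw [tricomi_eval hρ hs hK n, add_comm 1 ((n:ℝ))]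
  have hΓ : Real.Gamma ((n:ℝ)+1) ≠ 0 := (Real.Gamma_pos_of_pos (by positivity)).ne'
  have hρn : ρ ^ n ≠ 0 := pow_ne_zero _ hρ.ne'
  field_simp
  ring

lemma hsum_lemma (m K : ℕ) (hK : 0 < K) {ρ s : ℝ} (hρ : 0 < ρ) (hs : s < 1) :
    ∫ t in Ioi (0:ℝ), (Real.exp (-t) * ∑ n ∈ Finset.range (m+1), t ^ n / n.factorial) ^ K
        * ((1-s) * ρ * (1 + ρ * |t|) ^ (s-2))
      = ∑ k ∈ Finset.Nat.antidiagonalTuple (m+1) K,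
          ((Nat.multinomial Finset.univ k : ℝ)
              / ∏ i : Fin (m+1), ((Nat.factorial (i : ℕ) : ℝ)) ^ (k i))
            * ((1-s) * ρ * ∫ u in Ioi (0:ℝ),
                Real.exp (-((K:ℝ)*u)) * u ^ (∑ i : Fin (m+1), (i : ℕ) * k i)
                  * (1 + ρ * u) ^ (s-2)) := by
  have hK0 : (0:ℝ) < (K:ℝ) := by exact_mod_cast hK
  have hpt : ∀ t ∈ Ioi (0:ℝ),
      (Real.exp (-t) * ∑ n ∈ Finset.range (m+1), t ^ n / n.factorial) ^ K
        * ((1-s) * ρ * (1 + ρ * |t|) ^ (s-2))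
      = ∑ k ∈ Finset.Nat.antidiagonalTuple (m+1) K,
          (((Nat.multinomial Finset.univ k : ℝ)
              / ∏ i : Fin (m+1), ((Nat.factorial (i : ℕ) : ℝ)) ^ (k i)) * ((1-s) * ρ))
            * (Real.exp (-((K:ℝ)*t)) * t ^ (∑ i : Fin (m+1), (i : ℕ) * k i)
                * (1 + ρ * t) ^ (s-2)) := by
    intro t ht
    have ht0 : (0:ℝ) < t := ht
    have hexp : Real.exp (-t) ^ K = Real.exp (-((K:ℝ)*t)) := by
      rw [← Real.exp_nat_mul]; ring_nf
    rw [abs_of_pos ht0, mul_pow, hexp, multinomial_expand m K t, Finset.mul_sum,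
      Finset.sum_mul]
    exact Finset.sum_congr rfl fun k _ => by ring
  rw [setIntegral_congr_fun measurableSet_Ioi hpt,
    integral_finset_sum _ (fun k _ => ((term_integrable hρ hs hK0
      (∑ i : Fin (m+1), (i : ℕ) * k i)).const_mul _))]
  exact Finset.sum_congr rfl fun k _ => by
    rw [integral_const_mul]; ring

end H

/-- Theorem 1: the Mellin transform of `1 + ρ X_(1)`, where `X_(1)` is the minimum of `K`
i.i.d. `Gamma(M,1)` random variables, expressed via Tricomi's function. The sum runs over
all `M`-tuples `(k_1, …, k_M)` of nonnegative integers with `k_1 + ⋯ + k_M = K`, with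
`φ = (K!/(k_1!⋯k_M!)) / ∏_{n=0}^{M-1} (n!)^(k_{n+1})` and `ϑ = Σ_{ℓ=0}^{M-1} ℓ·k_{ℓ+1}`. -/
theorem mellin_multicast_eq_tricomi {Ω : Type*} [MeasureSpace Ω]
    [IsProbabilityMeasure (ℙ : Measure Ω)]
    (M K : ℕ) (hM : 1 ≤ M) (hK : 1 ≤ K)
    (ρ s : ℝ) (hρ : 0 < ρ) (hs : s < 1)
    (X : Fin K → Ω → ℝ)
    (hmeas : ∀ k, Measurable (X k))
    (hindep : iIndepFun X ℙ)
    (hdist : ∀ k, Measure.map (X k) ℙ = gammaMeasure M 1) :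
    (∫ ω, (1 + ρ * ⨅ k, X k ω) ^ (s - 1) ∂ℙ)
      = 1 + (s - 1)
          * ∑ k ∈ Finset.Nat.antidiagonalTuple M K,
              ((Nat.multinomial Finset.univ k : ℝ)
                  / ∏ i : Fin M, ((Nat.factorial (i : ℕ) : ℝ)) ^ (k i))
                * Real.Gamma (1 + (∑ i : Fin M, (i : ℕ) * k i : ℕ))
                / ρ ^ (∑ i : Fin M, (i : ℕ) * k i)
                * tricomiU ((∑ i : Fin M, (i : ℕ) * k i : ℕ) + 1)
                    ((∑ i : Fin M, (i : ℕ) * k i : ℕ) + s) (K / ρ) := by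
  obtain ⟨m, rfl⟩ : ∃ m, M = m + 1 := ⟨M - 1, (Nat.succ_pred_eq_of_pos hM).symm⟩
  haveI : Nonempty (Fin K) := ⟨⟨0, hK⟩⟩
  have hK0 : (0:ℝ) < (K:ℝ) := by exact_mod_cast hK
  -- the survival function
  have hSvnn : ∀ {u : ℝ}, 0 ≤ u →
      0 ≤ Real.exp (-u) * ∑ n ∈ Finset.range (m+1), u ^ n / n.factorial :=
    fun {u} hu => mul_nonneg (Real.exp_pos _).le (Finset.sum_nonneg fun n _ =>
      div_nonneg (pow_nonneg hu n) (by positivity))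
  -- survival of a single Gamma variable
  have hXgt : ∀ (k : Fin K) {u : ℝ}, 0 ≤ u → ℙ (X k ⁻¹' Ioi u)
      = ENNReal.ofReal (Real.exp (-u) * ∑ n ∈ Finset.range (m+1), u ^ n / n.factorial) := by
    intro k u hu
    rw [← Measure.map_apply (hmeas k) measurableSet_Ioi, hdist k]
    exact gammaMeasure_Ioi m hu
  have hSvle : ∀ {u : ℝ}, 0 ≤ u →
      Real.exp (-u) * ∑ n ∈ Finset.range (m+1), u ^ n / n.factorial ≤ 1 := by
    intro u hu
    have h2 := prob_le_one (μ := (ℙ : Measure Ω)) (s := X ⟨0, hK⟩ ⁻¹' Ioi u)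
    rw [hXgt ⟨0, hK⟩ hu] at h2
    exact ENNReal.ofReal_le_one.mp h2
  -- the minimum
  have hYmeas : Measurable (fun ω => ⨅ k, X k ω) := Measurable.iInf hmeas
  have hY'meas : Measurable (fun ω => max 0 (⨅ k, X k ω)) := measurable_const.max hYmeas
  have hYgt : ∀ {u : ℝ}, 0 ≤ u → ℙ {ω | u < ⨅ k, X k ω}
      = ENNReal.ofReal ((Real.exp (-u) * ∑ n ∈ Finset.range (m+1), u ^ n / n.factorial) ^ K) := by
    intro u hu
    have hset : {ω | u < ⨅ k, X k ω} = ⋂ k, X k ⁻¹' Ioi u := by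
      ext ω
      simp only [Set.mem_setOf_eq, Set.mem_iInter, Set.mem_preimage, Set.mem_Ioi]
      rw [← Finset.inf'_univ_eq_ciInf, Finset.lt_inf'_iff]
      simp
    rw [hset, hindep.meas_iInter (fun k => ⟨Ioi u, measurableSet_Ioi, rfl⟩)]
    rw [Finset.prod_congr rfl (fun k _ => hXgt k hu), Finset.prod_const,
      ← ENNReal.ofReal_pow (hSvnn hu)]
    simp [Finset.card_univ]
  -- a.e. nonnegativity of the minimum
  have hXnn : ∀ k, ∀ᵐ ω ∂(ℙ : Measure Ω), 0 ≤ X k ω := by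
    intro k
    have h0 : ℙ (X k ⁻¹' Iio 0) = 0 := by
      rw [← Measure.map_apply (hmeas k) measurableSet_Iio, hdist k, gammaMeasure,
        withDensity_apply _ measurableSet_Iio, lintegral_gammaPDF_of_nonpos le_rfl]
    rw [ae_iff]
    convert h0 using 2
    ext ω
    simp [not_le]
  have hYae : ∀ᵐ ω ∂(ℙ : Measure Ω), max 0 (⨅ k, X k ω) = ⨅ k, X k ω := by
    filter_upwards [ae_all_iff.2 hXnn] with ω hω
    exact max_eq_right (le_ciInf fun k => hω k)
  -- the primitive of h
  have hWcont : Continuous (fun y : ℝ => ∫ t in (0:ℝ)..y, (1-s) * ρ * (1 + ρ * |t|) ^ (s-2)) :=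
    intervalIntegral.continuous_primitive
      (fun a b => ((continuous_hfun hρ)).intervalIntegrable a b) 0
  have hWmeas : Measurable (fun ω => ∫ t in (0:ℝ)..(max 0 (⨅ k, X k ω)),
      (1-s) * ρ * (1 + ρ * |t|) ^ (s-2)) := hWcont.measurable.comp hY'meas
  have hhnn : ∀ t : ℝ, 0 ≤ (1-s) * ρ * (1 + ρ * |t|) ^ (s-2) := fun t =>
    mul_nonneg (mul_nonneg (by linarith) hρ.le)
      (Real.rpow_pos_of_pos (by positivity) _).le
  have hWnn : ∀ ω, 0 ≤ ∫ t in (0:ℝ)..(max 0 (⨅ k, X k ω)),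
      (1-s) * ρ * (1 + ρ * |t|) ^ (s-2) :=
    fun ω => intervalIntegral.integral_nonneg (le_max_left _ _) (fun u _ => hhnn u)
  -- layer cake formula
  have hlayer := lintegral_comp_eq_lintegral_meas_lt_mul (μ := (ℙ : Measure Ω))
      (f := fun ω => max 0 (⨅ k, X k ω)) (g := fun t => (1-s) * ρ * (1 + ρ * |t|) ^ (s-2))
      (ae_of_all _ fun ω => le_max_left _ _) hY'meas.aemeasurable
      (fun t _ => (continuous_hfun hρ).intervalIntegrable _ _)
      (ae_of_all _ fun t => hhnn t)
  -- rewrite the tail measure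
  have htail : ∫⁻ t in Ioi (0:ℝ), ℙ {a | t < max 0 (⨅ k, X k a)}
        * ENNReal.ofReal ((1-s) * ρ * (1 + ρ * |t|) ^ (s-2))
      = ∫⁻ t in Ioi (0:ℝ), ENNReal.ofReal
          ((Real.exp (-t) * ∑ n ∈ Finset.range (m+1), t ^ n / n.factorial) ^ K
            * ((1-s) * ρ * (1 + ρ * |t|) ^ (s-2))) := by
    refine setLIntegral_congr_fun measurableSet_Ioi (fun t ht => ?_)
    have ht0 : (0:ℝ) < t := ht
    have hset : {a | t < max 0 (⨅ k, X k a)} = {a | t < ⨅ k, X k a} := by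
      ext a
      simp [lt_max_iff, (not_lt.2 ht0.le : ¬ t < 0)]
    rw [hset, hYgt ht0.le, ← ENNReal.ofReal_mul (pow_nonneg (hSvnn ht0.le) K), mul_comm]
  -- integrability of the real integrand
  have hSvcont : Continuous (fun t : ℝ =>
      (Real.exp (-t) * ∑ n ∈ Finset.range (m+1), t ^ n / n.factorial) ^ K) := by fun_prop
  have hprodnn : ∀ t : ℝ, 0 < t →
      0 ≤ (Real.exp (-t) * ∑ n ∈ Finset.range (m+1), t ^ n / n.factorial) ^ K
        * ((1-s) * ρ * (1 + ρ * |t|) ^ (s-2)) := fun t ht =>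
    mul_nonneg (pow_nonneg (hSvnn ht.le) K) (hhnn t)
  have hφint : IntegrableOn (fun t : ℝ =>
      (Real.exp (-t) * ∑ n ∈ Finset.range (m+1), t ^ n / n.factorial) ^ K
        * ((1-s) * ρ * (1 + ρ * |t|) ^ (s-2))) (Ioi 0) := by
    refine Integrable.mono' (integrableOn_h hρ hs)
      ((hSvcont.mul (continuous_hfun hρ)).aestronglyMeasurable) ?_
    refine (ae_restrict_iff' measurableSet_Ioi).2 (ae_of_all _ fun t ht => ?_)
    have ht0 : (0:ℝ) < t := ht
    rw [Real.norm_eq_abs, abs_of_nonneg (hprodnn t ht0)]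
    have h1 : (Real.exp (-t) * ∑ n ∈ Finset.range (m+1), t ^ n / n.factorial) ^ K ≤ 1 :=
      pow_le_one₀ (hSvnn ht0.le) (hSvle ht0.le)
    calc (Real.exp (-t) * ∑ n ∈ Finset.range (m+1), t ^ n / n.factorial) ^ K
          * ((1-s) * ρ * (1 + ρ * |t|) ^ (s-2))
        ≤ 1 * ((1-s) * ρ * (1 + ρ * |t|) ^ (s-2)) :=
          mul_le_mul_of_nonneg_right h1 (hhnn t)
      _ = (1-s) * ρ * (1 + ρ * |t|) ^ (s-2) := one_mul _
  have hInn : 0 ≤ ∫ t in Ioi (0:ℝ),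
      (Real.exp (-t) * ∑ n ∈ Finset.range (m+1), t ^ n / n.factorial) ^ K
        * ((1-s) * ρ * (1 + ρ * |t|) ^ (s-2)) :=
    setIntegral_nonneg measurableSet_Ioi (fun t ht => hprodnn t ht)
  have hlint_eq : ∫⁻ t in Ioi (0:ℝ), ENNReal.ofReal
        ((Real.exp (-t) * ∑ n ∈ Finset.range (m+1), t ^ n / n.factorial) ^ K
          * ((1-s) * ρ * (1 + ρ * |t|) ^ (s-2)))
      = ENNReal.ofReal (∫ t in Ioi (0:ℝ),
          (Real.exp (-t) * ∑ n ∈ Finset.range (m+1), t ^ n / n.factorial) ^ K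
            * ((1-s) * ρ * (1 + ρ * |t|) ^ (s-2))) :=
    (ofReal_integral_eq_lintegral_ofReal hφint
      ((ae_restrict_iff' measurableSet_Ioi).2 (ae_of_all _ fun t ht => hprodnn t ht))).symm
  have hWofReal : ∫⁻ ω, ENNReal.ofReal (∫ t in (0:ℝ)..(max 0 (⨅ k, X k ω)),
        (1-s) * ρ * (1 + ρ * |t|) ^ (s-2)) ∂ℙ
      = ENNReal.ofReal (∫ t in Ioi (0:ℝ),
          (Real.exp (-t) * ∑ n ∈ Finset.range (m+1), t ^ n / n.factorial) ^ K
            * ((1-s) * ρ * (1 + ρ * |t|) ^ (s-2))) := by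
    rw [hlayer, htail, hlint_eq]
  have hWint : Integrable (fun ω => ∫ t in (0:ℝ)..(max 0 (⨅ k, X k ω)),
      (1-s) * ρ * (1 + ρ * |t|) ^ (s-2)) ℙ := by
    refine ⟨hWmeas.aestronglyMeasurable, ?_⟩
    rw [hasFiniteIntegral_iff_ofReal (ae_of_all _ hWnn), hWofReal]
    exact ENNReal.ofReal_lt_top
  have hWint_eq : ∫ ω, (∫ t in (0:ℝ)..(max 0 (⨅ k, X k ω)),
        (1-s) * ρ * (1 + ρ * |t|) ^ (s-2)) ∂ℙ
      = ∫ t in Ioi (0:ℝ),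
          (Real.exp (-t) * ∑ n ∈ Finset.range (m+1), t ^ n / n.factorial) ^ K
            * ((1-s) * ρ * (1 + ρ * |t|) ^ (s-2)) := by
    rw [integral_eq_lintegral_of_nonneg_ae (ae_of_all _ hWnn) hWmeas.aestronglyMeasurable,
      hWofReal, ENNReal.toReal_ofReal hInn]
  have hmain : ∫ ω, (1 + ρ * ⨅ k, X k ω) ^ (s - 1) ∂ℙ
      = 1 - ∫ t in Ioi (0:ℝ),
          (Real.exp (-t) * ∑ n ∈ Finset.range (m+1), t ^ n / n.factorial) ^ K
            * ((1-s) * ρ * (1 + ρ * |t|) ^ (s-2)) := by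
    have h1 : ∫ ω, (1 + ρ * ⨅ k, X k ω) ^ (s - 1) ∂ℙ
        = ∫ ω, (1 - ∫ t in (0:ℝ)..(max 0 (⨅ k, X k ω)),
            (1-s) * ρ * (1 + ρ * |t|) ^ (s-2)) ∂ℙ := by
      refine integral_congr_ae ?_
      filter_upwards [hYae] with ω hω
      have hftc := ftc_h (le_max_left 0 (⨅ k, X k ω)) hρ hs
      conv_lhs => rw [← hω]
      linarith [hftc]
    rw [h1, integral_sub (integrable_const 1) hWint, hWint_eq]
    simp
  rw [hmain, hsum_lemma m K hK hρ hs,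
    Finset.sum_congr rfl (fun k _ => term_eval hρ hs hK0
      (∑ i : Fin (m+1), (i : ℕ) * k i)
      ((Nat.multinomial Finset.univ k : ℝ)
        / ∏ i : Fin (m+1), ((Nat.factorial (i : ℕ) : ℝ)) ^ (k i)))]
  rw [Finset.mul_sum]
  rw [show (∑ k ∈ Finset.Nat.antidiagonalTuple (m+1) K,
      ((Nat.multinomial Finset.univ k : ℝ)
        / ∏ i : Fin (m+1), ((Nat.factorial (i : ℕ) : ℝ)) ^ (k i))
        * ((1-s) * ρ * ∫ u in Ioi (0:ℝ),
            Real.exp (-((K:ℝ)*u)) * u ^ (∑ i : Fin (m+1), (i : ℕ) * k i)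
              * (1 + ρ * u) ^ (s-2)))
    = ∑ k ∈ Finset.Nat.antidiagonalTuple (m+1) K,
      (-((s-1) * (((Nat.multinomial Finset.univ k : ℝ)
        / ∏ i : Fin (m+1), ((Nat.factorial (i : ℕ) : ℝ)) ^ (k i))
        * (ρ * ∫ u in Ioi (0:ℝ),
            Real.exp (-((K:ℝ)*u)) * u ^ (∑ i : Fin (m+1), (i : ℕ) * k i)
              * (1 + ρ * u) ^ (s-2)))))
    from Finset.sum_congr rfl fun k _ => by ring]
  rw [Finset.sum_neg_distrib, ← Finset.mul_sum]
  ring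
end

section
/- (Alzer's inequality, as used in Lemma 1) Let M ≥ 1 be an integer and let F_M denote the CDF of the Gamma(M,1) distribution, F_M(x) = (1/(M−1)!) ∫_0^x t^{M−1} e^{−t} dt. Then for every x > 0, (1 − e^{−bx})^M ≤ F_M(x) ≤ (1 − e^{−x})^M, where b = (M!)^{−1/M}. -/
open MeasureTheory Real Set Filter Topology

/-- The CDF of the `Gamma(M,1)` distribution,
`F_M(x) = (1/(M-1)!) ∫_0^x t^(M-1) e^(-t) dt`. -/
noncomputable def gammaNatCDF (M : ℕ) (x : ℝ) : ℝ :=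
  (1 / (Nat.factorial (M - 1) : ℝ)) * ∫ t in (0 : ℝ)..x, t ^ ((M : ℝ) - 1) * Real.exp (-t)

/-- Skeleton: a function vanishing at `0` and at `∞` whose derivative, once nonpositive,
stays nonpositive, is nonnegative on `[0,∞)`. -/
lemma alzer_key_nonneg {u u' : ℝ → ℝ}
    (hc : ContinuousOn u (Ici 0)) (h0 : u 0 = 0)
    (hlim : Tendsto u atTop (nhds 0))
    (hd : ∀ x ∈ Ioi (0:ℝ), HasDerivAt u (u' x) x)
    (hflip : ∀ ⦃x y : ℝ⦄, 0 < x → x ≤ y → u' x ≤ 0 → u' y ≤ 0) :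
    ∀ x : ℝ, 0 ≤ x → 0 ≤ u x := by
  intro x0 hx0
  rcases eq_or_lt_of_le hx0 with h | h
  · rw [← h, h0]
  by_contra hneg
  push_neg at hneg
  by_cases hex : ∃ x1 ∈ Ioc (0:ℝ) x0, u' x1 ≤ 0
  · obtain ⟨x1, hx1, hx1le⟩ := hex
    have hanti : AntitoneOn u (Ici x1) := by
      apply antitoneOn_of_deriv_nonpos (convex_Ici x1)
      · exact hc.mono (Ici_subset_Ici.2 hx1.1.le)
      · intro z hz
        rw [interior_Ici] at hz
        exact (hd z (lt_trans hx1.1 hz)).differentiableAt.differentiableWithinAt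
      · intro z hz
        rw [interior_Ici] at hz
        rw [(hd z (lt_trans hx1.1 hz)).deriv]
        exact hflip hx1.1 (le_of_lt hz) hx1le
    have hev : ∀ᶠ y in atTop, u y ≤ u x0 := by
      filter_upwards [eventually_ge_atTop x0] with y hy
      exact hanti (mem_Ici.2 hx1.2) (mem_Ici.2 (hx1.2.trans hy)) hy
    have := le_of_tendsto hlim hev
    linarith
  · push_neg at hex
    have hmono : StrictMonoOn u (Icc 0 x0) := by
      apply strictMonoOn_of_deriv_pos (convex_Icc 0 x0)
      · exact hc.mono Icc_subset_Ici_self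
      · intro z hz
        rw [interior_Icc] at hz
        rw [(hd z hz.1).deriv]
        exact hex z ⟨hz.1, hz.2.le⟩
    have := hmono (left_mem_Icc.2 h.le) (right_mem_Icc.2 h.le) h
    rw [h0] at this
    linarith

lemma gammaNatCDF_eq (M : ℕ) (hM : 1 ≤ M) (x : ℝ) :
    gammaNatCDF M x
      = (1 / (Nat.factorial (M - 1) : ℝ)) * ∫ t in (0:ℝ)..x, t ^ (M - 1 : ℕ) * Real.exp (-t) := by
  unfold gammaNatCDF
  congr 1
  apply intervalIntegral.integral_congr
  intro t _
  have h1 : ((M:ℝ) - 1) = ((M - 1 : ℕ) : ℝ) := by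
    rw [Nat.cast_sub hM, Nat.cast_one]
  simp only [h1, Real.rpow_natCast]

lemma gammaNatCDF_zero (M : ℕ) : gammaNatCDF M 0 = 0 := by
  simp [gammaNatCDF]

lemma hasDerivAt_gammaNatCDF (M : ℕ) (hM : 1 ≤ M) (x : ℝ) :
    HasDerivAt (gammaNatCDF M)
      ((1 / (Nat.factorial (M - 1) : ℝ)) * (x ^ (M - 1 : ℕ) * Real.exp (-x))) x := by
  have hcont : Continuous (fun t : ℝ => t ^ (M - 1 : ℕ) * Real.exp (-t)) := by
    exact (continuous_pow _).mul (Real.continuous_exp.comp continuous_neg)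
  have h1 : HasDerivAt (fun y : ℝ => ∫ t in (0:ℝ)..y, t ^ (M-1:ℕ) * Real.exp (-t))
      (x ^ (M-1:ℕ) * Real.exp (-x)) x := by
    exact intervalIntegral.integral_hasDerivAt_right (hcont.intervalIntegrable 0 x)
      (hcont.stronglyMeasurableAtFilter _ _) hcont.continuousAt
  have h2 := h1.const_mul (1 / (Nat.factorial (M - 1) : ℝ))
  refine HasDerivAt.congr_of_eventuallyEq h2 ?_
  exact Filter.Eventually.of_forall fun y => (gammaNatCDF_eq M hM y)

lemma tendsto_gammaNatCDF (M : ℕ) (hM : 1 ≤ M) :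
    Tendsto (gammaNatCDF M) atTop (nhds 1) := by
  have hs : (0:ℝ) < M := by exact_mod_cast hM
  have hint := Real.GammaIntegral_convergent (s := (M:ℝ)) hs
  have h1 : Tendsto (fun x : ℝ => ∫ t in (0:ℝ)..x, Real.exp (-t) * t ^ ((M:ℝ)-1)) atTop
      (nhds (Real.Gamma M)) := by
    rw [Real.Gamma_eq_integral hs]
    exact intervalIntegral_tendsto_integral_Ioi 0 hint tendsto_id
  have heq : ∀ x : ℝ, gammaNatCDF M x
      = (1 / (Nat.factorial (M - 1) : ℝ)) * ∫ t in (0:ℝ)..x, Real.exp (-t) * t ^ ((M:ℝ)-1) := by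
    intro x
    unfold gammaNatCDF
    congr 1
    apply intervalIntegral.integral_congr
    intro t _
    exact mul_comm _ _
  have hG : Real.Gamma (M:ℝ) = (Nat.factorial (M-1) : ℝ) := by
    have := Real.Gamma_nat_eq_factorial (M - 1)
    rwa [show ((M - 1 : ℕ) : ℝ) + 1 = (M : ℝ) by rw [Nat.cast_sub hM]; ring] at this
  have h2 := h1.const_mul (1 / (Nat.factorial (M - 1) : ℝ))
  rw [hG] at h2
  have hfac : (Nat.factorial (M-1) : ℝ) ≠ 0 := by
    exact_mod_cast (Nat.factorial_pos (M-1)).ne'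
  have : (1 / (Nat.factorial (M - 1) : ℝ)) * (Nat.factorial (M-1) : ℝ) = 1 := by
    field_simp
  rw [this] at h2
  exact h2.congr (fun x => (heq x).symm)

lemma hasDerivAt_oneSubExp (a x : ℝ) :
    HasDerivAt (fun y : ℝ => 1 - Real.exp (-(a*y))) (a * Real.exp (-(a*x))) x := by
  have h : HasDerivAt (fun y : ℝ => -(a*y)) (-a) x := by
    have h0 := ((hasDerivAt_id x).const_mul a).neg
    rw [mul_one] at h0
    exact h0
  have h2 := (Real.hasDerivAt_exp (-(a*x))).comp x h
  have h3 := h2.const_sub 1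
  refine h3.congr_deriv ?_
  ring

lemma hasDerivAt_oneSubExpPow (M : ℕ) (a x : ℝ) :
    HasDerivAt (fun y : ℝ => (1 - Real.exp (-(a*y))) ^ M)
      ((M : ℝ) * (1 - Real.exp (-(a*x))) ^ (M - 1) * (a * Real.exp (-(a*x)))) x :=
  (hasDerivAt_oneSubExp a x).pow M

lemma tendsto_oneSubExpPow (M : ℕ) (a : ℝ) (ha : 0 < a) :
    Tendsto (fun x : ℝ => (1 - Real.exp (-(a*x))) ^ M) atTop (nhds 1) := by
  have h1 : Tendsto (fun x : ℝ => -(a*x)) atTop atBot := by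
    rw [tendsto_neg_atBot_iff]
    exact (tendsto_const_mul_atTop_of_pos ha).2 tendsto_id
  have h2 : Tendsto (fun x : ℝ => Real.exp (-(a*x))) atTop (nhds 0) :=
    Real.tendsto_exp_atBot.comp h1
  have h3 := ((tendsto_const_nhds (x := (1:ℝ))).sub h2).pow M
  simpa using h3

lemma gammaNatCDF_one (x : ℝ) : gammaNatCDF 1 x = 1 - Real.exp (-x) := by
  unfold gammaNatCDF
  have h2 : (∫ t in (0:ℝ)..x, t ^ (((1:ℕ):ℝ) - 1) * Real.exp (-t))
      = ∫ t in (0:ℝ)..x, Real.exp (-t) := by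
    apply intervalIntegral.integral_congr
    intro t _
    norm_num
  have hD : ∀ t : ℝ, HasDerivAt (fun s : ℝ => -Real.exp (-s)) (Real.exp (-t)) t := by
    intro t
    have := ((Real.hasDerivAt_exp (-t)).comp t (hasDerivAt_neg t)).neg
    simp only [mul_neg, mul_one, neg_neg] at this
    exact this
  have h3 : (∫ t in (0:ℝ)..x, Real.exp (-t)) = (-Real.exp (-x)) - (-Real.exp (-0)) := by
    apply intervalIntegral.integral_eq_sub_of_hasDerivAt (fun t _ => hD t)
    exact ((Real.continuous_exp.comp continuous_neg).intervalIntegrable 0 x)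
  simp only [Nat.cast_one] at h2 ⊢
  rw [h2, h3]
  simp
  ring

lemma alzer_upper (M : ℕ) (hM : 2 ≤ M) (x : ℝ) (hx : 0 ≤ x) :
    gammaNatCDF M x ≤ (1 - Real.exp (-x)) ^ M := by
  have hM1 : 1 ≤ M := le_trans one_le_two hM
  have hMR : (2:ℝ) ≤ (M:ℝ) := by exact_mod_cast hM
  set c : ℝ := (Nat.factorial M : ℝ) ^ (((M:ℝ) - 1)⁻¹) with hc
  have hfacpos : (0:ℝ) < (Nat.factorial M : ℝ) := by exact_mod_cast Nat.factorial_pos M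
  have hc0 : 0 < c := Real.rpow_pos_of_pos hfacpos _
  have hcpow : c ^ (M - 1 : ℕ) = (Nat.factorial M : ℝ) := by
    rw [hc, ← Real.rpow_natCast ((Nat.factorial M : ℝ) ^ (((M:ℝ) - 1)⁻¹)) (M-1),
      ← Real.rpow_mul hfacpos.le]
    rw [show ((M - 1 : ℕ):ℝ) = (M:ℝ) - 1 by rw [Nat.cast_sub hM1]; norm_num]
    rw [inv_mul_cancel₀ (by linarith), Real.rpow_one]
  set w : ℝ → ℝ := fun t => t - c * (1 - Real.exp (-t)) with hwdef
  have hw0 : w 0 = 0 := by simp [hwdef]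
  have hwd : ∀ t : ℝ, HasDerivAt w (1 - c * Real.exp (-t)) t := by
    intro t
    have h1 := (hasDerivAt_oneSubExp 1 t).const_mul c
    have h2 := (hasDerivAt_id t).sub h1
    simp only [one_mul, mul_one] at h2
    exact h2
  -- once `w` is nonneg at a positive point, it stays nonneg
  have hwflip : ∀ ⦃s t : ℝ⦄, 0 < s → s ≤ t → 0 ≤ w s → 0 ≤ w t := by
    intro s t hs hst hws
    obtain ⟨ξ, hξ, hξeq⟩ := exists_hasDerivAt_eq_slope w (fun z => 1 - c * Real.exp (-z)) hs
      (fun z _ => (hwd z).continuousAt.continuousWithinAt)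
      (fun z _ => hwd z)
    have hξpos : 0 ≤ 1 - c * Real.exp (-ξ) := by
      rw [hξeq, hw0]
      simp only [sub_zero]
      exact div_nonneg hws hs.le
    have hmono : MonotoneOn w (Ici ξ) := by
      apply monotoneOn_of_deriv_nonneg (convex_Ici ξ)
      · exact fun z _ => (hwd z).continuousAt.continuousWithinAt
      · intro z hz
        exact (hwd z).differentiableAt.differentiableWithinAt
      · intro z hz
        rw [interior_Ici] at hz
        rw [(hwd z).deriv]
        have : Real.exp (-z) ≤ Real.exp (-ξ) := Real.exp_le_exp.2 (by linarith [hz.out])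
        nlinarith
    have h1 : w s ≤ w t := hmono (mem_Ici.2 (le_of_lt hξ.2)) (mem_Ici.2 (hξ.2.le.trans hst)) hst
    linarith
  -- the derivative of the difference
  set u' : ℝ → ℝ := fun z =>
    (M:ℝ) * (1 - Real.exp (-z)) ^ (M-1) * Real.exp (-z)
      - (1 / (Nat.factorial (M - 1) : ℝ)) * (z ^ (M-1:ℕ) * Real.exp (-z)) with hu'def
  have hd : ∀ z : ℝ, HasDerivAt (fun t => (1 - Real.exp (-t)) ^ M - gammaNatCDF M t) (u' z) z := by
    intro z
    have h1 := (hasDerivAt_oneSubExpPow M 1 z).sub (hasDerivAt_gammaNatCDF M hM1 z)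
    simp only [one_mul] at h1
    exact h1
  -- sign characterization of u'
  have hiff : ∀ z : ℝ, 0 < z → (u' z ≤ 0 ↔ 0 ≤ w z) := by
    intro z hz
    have hez : 0 < Real.exp (-z) := Real.exp_pos _
    have he1 : Real.exp (-z) < 1 := Real.exp_lt_one_iff.mpr (by linarith)
    have hF : (0:ℝ) < (Nat.factorial (M-1) : ℝ) := by exact_mod_cast Nat.factorial_pos (M-1)
    have hMF : (M:ℝ) * (Nat.factorial (M-1) : ℝ) = (Nat.factorial M : ℝ) := by
      exact_mod_cast Nat.mul_factorial_pred (by omega)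
    have step1 : u' z ≤ 0 ↔ (M:ℝ) * (Nat.factorial (M-1) : ℝ) * (1 - Real.exp (-z)) ^ (M-1)
        ≤ z ^ (M-1) := by
      rw [hu'def]
      constructor
      · intro h
        have key : ((M:ℝ) * (1 - Real.exp (-z)) ^ (M-1) * Real.exp (-z)
            - (1/(Nat.factorial (M-1) : ℝ)) * (z ^ (M-1) * Real.exp (-z))) * (Nat.factorial (M-1) : ℝ)
            = ((M:ℝ) * (Nat.factorial (M-1) : ℝ) * (1 - Real.exp (-z)) ^ (M-1) - z ^ (M-1))
              * Real.exp (-z) := by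
          field_simp
        nlinarith [mul_nonpos_of_nonpos_of_nonneg h hF.le]
      · intro h
        have key : ((M:ℝ) * (1 - Real.exp (-z)) ^ (M-1) * Real.exp (-z)
            - (1/(Nat.factorial (M-1) : ℝ)) * (z ^ (M-1) * Real.exp (-z))) * (Nat.factorial (M-1) : ℝ)
            = ((M:ℝ) * (Nat.factorial (M-1) : ℝ) * (1 - Real.exp (-z)) ^ (M-1) - z ^ (M-1))
              * Real.exp (-z) := by
          field_simp
        nlinarith [mul_nonpos_of_nonpos_of_nonneg (sub_nonpos.mpr h) hez.le]
    have step2 : (M:ℝ) * (Nat.factorial (M-1) : ℝ) * (1 - Real.exp (-z)) ^ (M-1) ≤ z ^ (M-1)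
        ↔ c * (1 - Real.exp (-z)) ≤ z := by
      rw [hMF, ← hcpow, ← mul_pow]
      exact pow_le_pow_iff_left₀ (mul_nonneg hc0.le (by linarith)) hz.le (by omega)
    rw [step1, step2]
    exact sub_nonneg.symm
  -- apply the skeleton
  have hkey := alzer_key_nonneg (u := fun t => (1 - Real.exp (-t)) ^ M - gammaNatCDF M t) (u' := u')
    (fun z _ => (hd z).continuousAt.continuousWithinAt)
    (by simp [gammaNatCDF_zero, zero_pow (by omega : M ≠ 0)])
    (by
      have h1 := (tendsto_oneSubExpPow M 1 one_pos).sub (tendsto_gammaNatCDF M hM1)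
      simp only [one_mul, sub_self] at h1
      exact h1)
    (fun z hz => hd z)
    (by
      intro s t hs hst hus
      exact (hiff t (lt_of_lt_of_le hs hst)).mpr (hwflip hs hst ((hiff s hs).mp hus)))
    x hx
  exact sub_nonneg.mp hkey

lemma alzer_q_antitone :
    AntitoneOn (fun y : ℝ => y⁻¹ - Real.exp (-y) / (1 - Real.exp (-y))) (Ioi 0) := by
  have hd : ∀ y : ℝ, 0 < y → HasDerivAt (fun y : ℝ => y⁻¹ - Real.exp (-y) / (1 - Real.exp (-y)))
      (-(y^2)⁻¹ - ((-Real.exp (-y)) * (1 - Real.exp (-y)) - Real.exp (-y) * Real.exp (-y))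
        / (1 - Real.exp (-y))^2) y := by
    intro y hy
    have he1 : Real.exp (-y) < 1 := Real.exp_lt_one_iff.mpr (by linarith)
    have hne : 1 - Real.exp (-y) ≠ 0 := by linarith
    have h1 : HasDerivAt (fun y : ℝ => Real.exp (-y)) (-Real.exp (-y)) y := by
      have h0 := (Real.hasDerivAt_exp (-y)).comp y (hasDerivAt_neg y)
      simp only [mul_neg, mul_one] at h0
      exact h0
    have h2 : HasDerivAt (fun y : ℝ => 1 - Real.exp (-y)) (Real.exp (-y)) y := by
      simpa [one_mul] using hasDerivAt_oneSubExp 1 y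
    exact (hasDerivAt_inv hy.ne').sub (h1.div h2 hne)
  apply antitoneOn_of_deriv_nonpos (convex_Ioi 0)
  · exact fun y hy => (hd y hy).continuousAt.continuousWithinAt
  · intro y hy
    rw [interior_Ioi] at hy
    exact (hd y hy).differentiableAt.differentiableWithinAt
  · intro y hy
    rw [interior_Ioi] at hy
    rw [(hd y hy).deriv]
    have hy0 : (0:ℝ) < y := hy
    have hE : 0 < Real.exp (-y) := Real.exp_pos _
    have he1 : Real.exp (-y) < 1 := Real.exp_lt_one_iff.mpr (by linarith)
    have hEp : 0 < Real.exp (-(y/2)) := Real.exp_pos _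
    have hs := Real.self_lt_sinh_iff.mpr (half_pos hy0)
    rw [Real.sinh_eq] at hs
    have hexy : Real.exp (-(y/2)) * Real.exp (y/2) = 1 := by
      rw [← Real.exp_add]; norm_num
    have hsq : Real.exp (-(y/2)) * Real.exp (-(y/2)) = Real.exp (-y) := by
      rw [← Real.exp_add]; congr 1; ring
    have h5 : (Real.exp (y/2) - Real.exp (-(y/2))) * Real.exp (-(y/2)) = 1 - Real.exp (-y) := by
      rw [← hexy, ← hsq]; ring
    have hkey : y * Real.exp (-(y/2)) < 1 - Real.exp (-y) := by
      have h6 := mul_lt_mul_of_pos_right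
        (show y < Real.exp (y/2) - Real.exp (-(y/2)) by linarith) hEp
      rw [h5] at h6
      exact h6
    have h4 : y^2 * Real.exp (-y) = (y * Real.exp (-(y/2))) * (y * Real.exp (-(y/2))) := by
      rw [← hsq]; ring
    have hsq2 : y^2 * Real.exp (-y) ≤ (1 - Real.exp (-y))^2 := by
      rw [h4]
      nlinarith [mul_pos hy0 hEp]
    have hfrac : Real.exp (-y) / (1 - Real.exp (-y))^2 ≤ (y^2)⁻¹ := by
      rw [inv_eq_one_div, div_le_div_iff₀ (by nlinarith : (0:ℝ) < (1 - Real.exp (-y))^2) (by positivity)]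
      nlinarith
    have heq : ((-Real.exp (-y)) * (1 - Real.exp (-y)) - Real.exp (-y) * Real.exp (-y))
        = -Real.exp (-y) := by ring
    rw [heq, neg_div]
    linarith

noncomputable def alzerPsi (M : ℕ) (b : ℝ) (z : ℝ) : ℝ :=
  ((M:ℝ)-1) * (Real.log (b*z) - Real.log (1 - Real.exp (-(b*z)))) - (1-b)*z

lemma alzerPsi_zero (M : ℕ) (b : ℝ) : alzerPsi M b 0 = 0 := by
  simp [alzerPsi]

lemma hasDerivAt_alzerPsi (M : ℕ) (b : ℝ) (hb : 0 < b) (z : ℝ) (hz : 0 < z) :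
    HasDerivAt (alzerPsi M b)
      (((M:ℝ)-1) * ((b*z)⁻¹ * b - (1 - Real.exp (-(b*z)))⁻¹ * (b * Real.exp (-(b*z)))) - (1-b)) z := by
  have hbz : 0 < b*z := mul_pos hb hz
  have hE : Real.exp (-(b*z)) < 1 := Real.exp_lt_one_iff.mpr (by linarith)
  have h1e : (0:ℝ) < 1 - Real.exp (-(b*z)) := by linarith
  have hlog1 : HasDerivAt (fun y : ℝ => Real.log (b*y)) ((b*z)⁻¹ * b) z :=
    (Real.hasDerivAt_log hbz.ne').comp z (by simpa using (hasDerivAt_id z).const_mul b)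
  have hlog2 : HasDerivAt (fun y : ℝ => Real.log (1 - Real.exp (-(b*y))))
      ((1 - Real.exp (-(b*z)))⁻¹ * (b * Real.exp (-(b*z)))) z :=
    by have h0 := (Real.hasDerivAt_log h1e.ne').comp z (hasDerivAt_oneSubExp b z); exact h0
  have hlin : HasDerivAt (fun y : ℝ => (1-b)*y) (1-b) z := by
    simpa using (hasDerivAt_id z).const_mul (1-b)
  exact ((hlog1.sub hlog2).const_mul ((M:ℝ)-1)).sub hlin

lemma alzerPsi_concave (M : ℕ) (hM : 2 ≤ M) (b : ℝ) (hb : 0 < b) :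
    ConcaveOn ℝ (Ici 0) (alzerPsi M b) := by
  have hMR : (2:ℝ) ≤ (M:ℝ) := by exact_mod_cast hM
  -- continuity on Ici 0
  have hcont : ContinuousOn (alzerPsi M b) (Ici 0) := by
    intro z hz
    rcases eq_or_lt_of_le (mem_Ici.mp hz) with h | h
    · -- z = 0
      subst h
      rw [← continuousWithinAt_Ioi_iff_Ici]
      have hψ0 : alzerPsi M b 0 = 0 := alzerPsi_zero M b
      unfold ContinuousWithinAt
      rw [hψ0]
      have hslope : Tendsto (fun t : ℝ => (1 - Real.exp (-t))/t) (𝓝[≠] (0:ℝ)) (𝓝 1) := by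
        have h' : HasDerivAt (fun t : ℝ => 1 - Real.exp (-t)) 1 0 := by
          simpa using hasDerivAt_oneSubExp 1 0
        rw [hasDerivAt_iff_tendsto_slope] at h'
        refine h'.congr' ?_
        filter_upwards [self_mem_nhdsWithin] with t ht
        rw [slope_def_field]
        simp [div_eq_mul_inv]
      have hmap : Tendsto (fun z : ℝ => b*z) (𝓝[>] (0:ℝ)) (𝓝[≠] (0:ℝ)) := by
        rw [tendsto_nhdsWithin_iff]
        constructor
        · have h1 : Tendsto (fun z : ℝ => b*z) (𝓝 (0:ℝ)) (𝓝 (b*0)) :=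
            (continuous_const.mul continuous_id).tendsto 0
          simpa using h1.mono_left nhdsWithin_le_nhds
        · filter_upwards [self_mem_nhdsWithin] with z hz
          exact (mul_pos hb hz).ne'
      have hcomp := hslope.comp hmap
      have hlog := (Real.continuousAt_log one_ne_zero).tendsto.comp hcomp
      have h2 : Tendsto (fun z : ℝ => (1-b)*z) (𝓝[>] (0:ℝ)) (𝓝 0) := by
        have h3 : Tendsto (fun z : ℝ => (1-b)*z) (𝓝 (0:ℝ)) (𝓝 ((1-b)*0)) :=
          (continuous_const.mul continuous_id).tendsto 0
        have h4 := h3.mono_left (nhdsWithin_le_nhds (s := Ioi (0:ℝ)))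
        simpa using h4
      have h1 := hlog.const_mul (-((M:ℝ)-1))
      have hT := h1.sub h2
      rw [Real.log_one] at hT
      simp only [Function.comp] at hT
      refine Tendsto.congr' ?_ (by simpa using hT)
      filter_upwards [self_mem_nhdsWithin] with z hz
      have hbz : 0 < b*z := mul_pos hb hz
      have hE : Real.exp (-(b*z)) < 1 := Real.exp_lt_one_iff.mpr (by linarith)
      unfold alzerPsi
      rw [Real.log_div (by linarith) hbz.ne']
      ring
    · exact (hasDerivAt_alzerPsi M b hb z h).continuousAt.continuousWithinAt
  apply AntitoneOn.concaveOn_of_deriv (convex_Ici 0) hcont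
  · intro z hz
    rw [interior_Ici] at hz
    exact (hasDerivAt_alzerPsi M b hb z hz).differentiableAt.differentiableWithinAt
  · intro s hs t ht hst
    rw [interior_Ici] at hs ht
    rw [(hasDerivAt_alzerPsi M b hb s hs).deriv, (hasDerivAt_alzerPsi M b hb t ht).deriv]
    have hq := alzer_q_antitone (mem_Ioi.mpr (mul_pos hb hs)) (mem_Ioi.mpr (mul_pos hb ht))
      (by nlinarith)
    simp only [] at hq
    have hmul : ((M:ℝ)-1) * ((b*t)⁻¹ * b - (1 - Real.exp (-(b*t)))⁻¹ * (b * Real.exp (-(b*t))))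
        ≤ ((M:ℝ)-1) * ((b*s)⁻¹ * b - (1 - Real.exp (-(b*s)))⁻¹ * (b * Real.exp (-(b*s)))) := by
      have e1 : ∀ r : ℝ, 0 < r → (b*r)⁻¹ * b - (1 - Real.exp (-(b*r)))⁻¹ * (b * Real.exp (-(b*r)))
          = b * ((b*r)⁻¹ - Real.exp (-(b*r)) / (1 - Real.exp (-(b*r)))) := by
        intro r hr
        simp only [div_eq_mul_inv]
        ring
      rw [e1 s hs, e1 t ht]
      have := mul_le_mul_of_nonneg_left hq (by positivity : (0:ℝ) ≤ b)
      exact mul_le_mul_of_nonneg_left this (by linarith : (0:ℝ) ≤ (M:ℝ)-1)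
    linarith

lemma alzer_div_aux (F A B : ℝ) (hF : 0 < F) : (1/F)*A - B ≤ 0 ↔ A ≤ F*B := by
  have e : ((1/F)*A - B)*F = A - F*B := by field_simp
  constructor
  · intro h
    have h2 := mul_nonpos_of_nonpos_of_nonneg h hF.le
    rw [e] at h2
    linarith
  · intro h
    have h2 : ((1/F)*A - B)*F ≤ 0 := by rw [e]; linarith
    nlinarith [h2]

lemma alzer_lower (M : ℕ) (hM : 2 ≤ M) (x : ℝ) (hx : 0 ≤ x) :
    (1 - Real.exp (-((Nat.factorial M : ℝ) ^ (-(1:ℝ)/(M:ℝ)) * x))) ^ M ≤ gammaNatCDF M x := by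
  have hM1 : 1 ≤ M := le_trans one_le_two hM
  have hMR : (2:ℝ) ≤ (M:ℝ) := by exact_mod_cast hM
  have hMne0 : (M:ℝ) ≠ 0 := by linarith
  have hfacpos : (0:ℝ) < (Nat.factorial M : ℝ) := by exact_mod_cast Nat.factorial_pos M
  set b : ℝ := (Nat.factorial M : ℝ) ^ (-(1:ℝ)/(M:ℝ)) with hbdef
  have hb0 : 0 < b := Real.rpow_pos_of_pos hfacpos _
  have hMne : M - 1 + 1 = M := by omega
  have hbM : (Nat.factorial M : ℝ) * b ^ (M:ℕ) = 1 := by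
    rw [hbdef, ← Real.rpow_natCast ((Nat.factorial M : ℝ) ^ (-(1:ℝ)/(M:ℝ))) M,
      ← Real.rpow_mul hfacpos.le]
    rw [show (-(1:ℝ)/(M:ℝ)) * ((M:ℕ):ℝ) = -1 by field_simp]
    rw [Real.rpow_neg_one]
    field_simp
  have hbpow : (Nat.factorial M : ℝ) * (b ^ (M-1:ℕ) * b) = 1 := by
    rw [← pow_succ, hMne]
    exact hbM
  set v' : ℝ → ℝ := fun z =>
    (1 / (Nat.factorial (M - 1) : ℝ)) * (z ^ (M-1:ℕ) * Real.exp (-z))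
      - (M:ℝ) * (1 - Real.exp (-(b*z))) ^ (M-1) * (b * Real.exp (-(b*z))) with hv'def
  have hd : ∀ z : ℝ, HasDerivAt (fun t => gammaNatCDF M t - (1 - Real.exp (-(b*t))) ^ M) (v' z) z :=
    fun z => (hasDerivAt_gammaNatCDF M hM1 z).sub (hasDerivAt_oneSubExpPow M b z)
  have hF : (0:ℝ) < (Nat.factorial (M-1) : ℝ) := by exact_mod_cast Nat.factorial_pos (M-1)
  have hMF : (M:ℝ) * (Nat.factorial (M-1) : ℝ) = (Nat.factorial M : ℝ) := by
    exact_mod_cast Nat.mul_factorial_pred (by omega)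
  have hiff : ∀ z : ℝ, 0 < z → (v' z ≤ 0 ↔ alzerPsi M b z ≤ 0) := by
    intro z hz
    have hbz : 0 < b*z := mul_pos hb0 hz
    have hez : 0 < Real.exp (-z) := Real.exp_pos _
    have hE' : Real.exp (-(b*z)) < 1 := Real.exp_lt_one_iff.mpr (by linarith)
    have hE'0 : 0 < Real.exp (-(b*z)) := Real.exp_pos _
    have h1e : (0:ℝ) < 1 - Real.exp (-(b*z)) := by linarith
    have step1 : v' z ≤ 0 ↔ z ^ (M-1:ℕ) * Real.exp (-z)
        ≤ (Nat.factorial (M-1) : ℝ) * ((M:ℝ) * (1 - Real.exp (-(b*z))) ^ (M-1) * (b * Real.exp (-(b*z)))) :=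
      alzer_div_aux _ _ _ hF
    have hbp : (0:ℝ) < b^(M-1:ℕ) := pow_pos hb0 _
    have e1 : b^(M-1:ℕ) * (z ^ (M-1:ℕ) * Real.exp (-z)) = (b*z)^(M-1:ℕ) * Real.exp (-z) := by
      rw [mul_pow]; ring
    have e2 : b^(M-1:ℕ) * ((Nat.factorial (M-1) : ℝ)
        * ((M:ℝ) * (1 - Real.exp (-(b*z))) ^ (M-1) * (b * Real.exp (-(b*z)))))
        = (1 - Real.exp (-(b*z))) ^ (M-1) * Real.exp (-(b*z)) := by
      calc b^(M-1:ℕ) * ((Nat.factorial (M-1) : ℝ)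
            * ((M:ℝ) * (1 - Real.exp (-(b*z))) ^ (M-1) * (b * Real.exp (-(b*z)))))
          = ((M:ℝ) * (Nat.factorial (M-1) : ℝ)) * (b^(M-1:ℕ) * b)
            * ((1 - Real.exp (-(b*z))) ^ (M-1) * Real.exp (-(b*z))) := by ring
        _ = (Nat.factorial M : ℝ) * (b^(M-1:ℕ) * b)
            * ((1 - Real.exp (-(b*z))) ^ (M-1) * Real.exp (-(b*z))) := by rw [hMF]
        _ = (1 - Real.exp (-(b*z))) ^ (M-1) * Real.exp (-(b*z)) := by
            rw [hbpow, one_mul]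
    have step2 : z ^ (M-1:ℕ) * Real.exp (-z)
        ≤ (Nat.factorial (M-1) : ℝ) * ((M:ℝ) * (1 - Real.exp (-(b*z))) ^ (M-1) * (b * Real.exp (-(b*z))))
        ↔ (b*z)^(M-1:ℕ) * Real.exp (-z)
          ≤ (1 - Real.exp (-(b*z))) ^ (M-1) * Real.exp (-(b*z)) := by
      constructor
      · intro h
        have h2 := mul_le_mul_of_nonneg_left h hbp.le
        rwa [e1, e2] at h2
      · intro h
        have h2 : b^(M-1:ℕ) * (z ^ (M-1:ℕ) * Real.exp (-z)) ≤ b^(M-1:ℕ)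
            * ((Nat.factorial (M-1) : ℝ) * ((M:ℝ) * (1 - Real.exp (-(b*z))) ^ (M-1)
              * (b * Real.exp (-(b*z))))) := by
          rw [e1, e2]
          exact h
        exact le_of_mul_le_mul_left h2 hbp
    have hLpos : 0 < (b*z)^(M-1:ℕ) * Real.exp (-z) := mul_pos (pow_pos hbz _) hez
    have hRpos : 0 < (1 - Real.exp (-(b*z))) ^ (M-1) * Real.exp (-(b*z)) :=
      mul_pos (pow_pos h1e _) hE'0
    have hcast : ((M-1:ℕ):ℝ) = (M:ℝ)-1 := by rw [Nat.cast_sub hM1]; norm_num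
    have step3 : (b*z)^(M-1:ℕ) * Real.exp (-z)
        ≤ (1 - Real.exp (-(b*z))) ^ (M-1) * Real.exp (-(b*z)) ↔ alzerPsi M b z ≤ 0 := by
      rw [← Real.log_le_log_iff hLpos hRpos]
      rw [Real.log_mul (pow_pos hbz _).ne' (Real.exp_ne_zero _),
        Real.log_mul (pow_pos h1e _).ne' (Real.exp_ne_zero _),
        Real.log_pow, Real.log_pow, Real.log_exp, Real.log_exp, hcast]
      unfold alzerPsi
      constructor <;> intro h <;> linarith
    exact step1.trans (step2.trans step3)
  have hconc := alzerPsi_concave M hM b hb0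
  have hψflip : ∀ ⦃s t : ℝ⦄, 0 < s → s ≤ t → alzerPsi M b s ≤ 0 → alzerPsi M b t ≤ 0 := by
    intro s t hs hst hψs
    by_contra hψt
    push_neg at hψt
    have ht : 0 < t := lt_of_lt_of_le hs hst
    have ha : (0:ℝ) ≤ 1 - s/t := by
      rw [sub_nonneg]
      exact (div_le_one ht).mpr hst
    have hb' : (0:ℝ) ≤ s/t := by positivity
    have hsum : (1 - s/t) + s/t = 1 := by ring
    have hcomb := hconc.2 (mem_Ici.mpr (le_refl (0:ℝ))) (mem_Ici.mpr ht.le) ha hb' hsum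
    rw [smul_eq_mul, smul_eq_mul, smul_eq_mul, smul_eq_mul, alzerPsi_zero] at hcomb
    have hpt : (1 - s/t) * 0 + (s/t) * t = s := by field_simp; ring
    rw [hpt] at hcomb
    have hq : 0 < (s/t) * alzerPsi M b t := mul_pos (by positivity) hψt
    linarith
  have hkey := alzer_key_nonneg
    (u := fun t => gammaNatCDF M t - (1 - Real.exp (-(b*t))) ^ M) (u' := v')
    (fun z _ => (hd z).continuousAt.continuousWithinAt)
    (by simp [gammaNatCDF_zero, zero_pow (by omega : M ≠ 0)])
    (by
      have h1 := (tendsto_gammaNatCDF M hM1).sub (tendsto_oneSubExpPow M b hb0)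
      simpa using h1)
    (fun z _ => hd z)
    (by
      intro s t hs hst hvs
      exact (hiff t (lt_of_lt_of_le hs hst)).mpr (hψflip hs hst ((hiff s hs).mp hvs)))
    x hx
  exact sub_nonneg.mp hkey

/-- Alzer's inequality: for every integer `M ≥ 1` and `x > 0`,
`(1 - e^(-b x))^M ≤ F_M(x) ≤ (1 - e^(-x))^M` where `b = (M!)^(-1/M)`. -/
theorem alzer_inequality (M : ℕ) (hM : 1 ≤ M) (x : ℝ) (hx : 0 < x) :
    (1 - Real.exp (-((Nat.factorial M : ℝ) ^ (-(1 : ℝ) / M) * x))) ^ M ≤ gammaNatCDF M x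
    ∧ gammaNatCDF M x ≤ (1 - Real.exp (-x)) ^ M := by
  rcases eq_or_lt_of_le hM with h1 | h2
  · subst h1
    have hb1 : ((Nat.factorial 1 : ℝ) ^ (-(1 : ℝ) / (1:ℕ)) : ℝ) = 1 := by
      norm_num
    rw [gammaNatCDF_one, hb1]
    norm_num
  · have hM2 : 2 ≤ M := h2
    exact ⟨alzer_lower M hM2 x hx.le, alzer_upper M hM2 x hx.le⟩
end

section
/- Let M ≥ 1 be a fixed integer, let ρ > 0, and let s < 1 be real. For K ≥ 1 set d_K = (M!/K)^{1/M} and define the asymptotic Mellin transform M_K^{as}(s) = 1 + (s−1)·ρ·∫_0^∞ (1+ρx)^{s−2} e^{−(x/d_K)^M} dx. Then lim_{K→∞} (1 − M_K^{as}(s)) / d_K = (1−s)·ρ·Γ(1 + 1/M). In particular M_K^{as}(s) → 1 and 1 − M_K^{as}(s) decays at rate Θ(K^{−1/M}) as K → ∞. -/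
open MeasureTheory Real Filter Set

/-- The asymptotic Mellin transform of the multicast service increment: with
`d_K = (M!/K)^(1/M)`,
`M_K^as(s) = 1 + (s-1)·ρ·∫_0^∞ (1+ρx)^(s-2) e^(-(x/d_K)^M) dx`. -/
noncomputable def asympMellin (M : ℕ) (ρ s : ℝ) (K : ℕ) : ℝ :=
  1 + (s - 1) * ρ * ∫ x in Set.Ioi (0 : ℝ),
    (1 + ρ * x) ^ (s - 2)
      * Real.exp (-((x / ((Nat.factorial M : ℝ) / K) ^ ((1 : ℝ) / M)) ^ M))

section aux
variable {M : ℕ} {ρ s : ℝ}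

lemma exp_pow_integrable (hM : 1 ≤ M) :
    IntegrableOn (fun y : ℝ => Real.exp (-(y ^ M))) (Ioi 0) := by
  have h := integrableOn_rpow_mul_exp_neg_rpow (p := (M : ℝ)) (s := 0)
    (by norm_num) (by exact_mod_cast hM)
  simpa [Real.rpow_natCast] using h

lemma exp_pow_integral (hM : 1 ≤ M) :
    ∫ y in Ioi (0:ℝ), Real.exp (-(y ^ M)) = Real.Gamma (1 + 1 / M) := by
  have h := integral_exp_neg_rpow (p := (M : ℝ)) (by positivity)
  simpa [Real.rpow_natCast, add_comm] using h

end aux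

section aux2
variable {M : ℕ} {ρ s : ℝ}

lemma J_tendsto (hM : 1 ≤ M) (hρ : 0 < ρ) (hs : s < 1) {d : ℕ → ℝ}
    (hd0 : ∀ K, 0 ≤ d K) (hdlim : Filter.Tendsto d Filter.atTop (nhds 0)) :
    Filter.Tendsto (fun K => ∫ y in Ioi (0:ℝ),
        (1 + ρ * d K * y) ^ (s - 2) * Real.exp (-(y ^ M)))
      Filter.atTop (nhds (Real.Gamma (1 + 1 / M))) := by
  rw [← exp_pow_integral hM]
  apply MeasureTheory.tendsto_integral_of_dominated_convergence
    (fun y : ℝ => Real.exp (-(y ^ M)))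
  · intro K
    apply ContinuousOn.aestronglyMeasurable _ measurableSet_Ioi
    intro y hy
    have hy' : (0:ℝ) < y := hy
    have hdK := hd0 K
    have hbase : (0:ℝ) < 1 + ρ * d K * y := by
      have h0 : 0 ≤ ρ * d K * y := by positivity
      linarith
    apply ContinuousAt.continuousWithinAt
    exact (((continuous_const.add (continuous_const.mul continuous_id)).continuousAt).rpow_const
      (Or.inl hbase.ne')).mul
      ((Real.continuous_exp.comp (continuous_pow M).neg).continuousAt)
  · exact exp_pow_integrable hM
  · intro K
    filter_upwards [ae_restrict_mem measurableSet_Ioi] with y hy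
    have h1 : (1:ℝ) ≤ 1 + ρ * d K * y := by
      have : 0 ≤ ρ * d K * y := by
        have := hd0 K
        have hy' := le_of_lt (mem_Ioi.mp hy)
        positivity
      linarith
    have h2 : (1 + ρ * d K * y) ^ (s - 2) ≤ 1 :=
      Real.rpow_le_one_of_one_le_of_nonpos h1 (by linarith)
    have h3 : 0 ≤ (1 + ρ * d K * y) ^ (s - 2) := Real.rpow_nonneg (by linarith) _
    rw [Real.norm_eq_abs, abs_mul, abs_of_nonneg h3, abs_of_nonneg (Real.exp_pos _).le]
    calc (1 + ρ * d K * y) ^ (s - 2) * Real.exp (-(y ^ M))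
        ≤ 1 * Real.exp (-(y ^ M)) := by
          apply mul_le_mul_of_nonneg_right h2 (Real.exp_pos _).le
      _ = Real.exp (-(y ^ M)) := one_mul _
  · filter_upwards [ae_restrict_mem measurableSet_Ioi] with y hy
    have hb : Filter.Tendsto (fun K => 1 + ρ * d K * y) Filter.atTop (nhds 1) := by
      have : Filter.Tendsto (fun K => ρ * d K * y) Filter.atTop (nhds 0) := by
        have := (hdlim.const_mul ρ).mul_const y
        simpa using this
      simpa using (tendsto_const_nhds.add this : Filter.Tendsto
        (fun K => (1:ℝ) + ρ * d K * y) Filter.atTop (nhds (1 + 0)))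
    have hc : ContinuousAt (fun t : ℝ => t ^ (s - 2)) 1 :=
      Real.continuousAt_rpow_const 1 (s - 2) (Or.inl one_ne_zero)
    have := (hc.tendsto.comp hb).mul_const (Real.exp (-(y ^ M)))
    simpa using this

end aux2

section aux3
variable {M : ℕ} {ρ s : ℝ}

lemma change_var (hρ : 0 < ρ) {d : ℝ} (hd : 0 < d) :
    ∫ x in Ioi (0:ℝ), (1 + ρ * x) ^ (s - 2) * Real.exp (-((x / d) ^ M))
      = d * ∫ y in Ioi (0:ℝ), (1 + ρ * d * y) ^ (s - 2) * Real.exp (-(y ^ M)) := by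
  have h := integral_comp_mul_left_Ioi
    (fun y => (1 + ρ * d * y) ^ (s - 2) * Real.exp (-(y ^ M))) 0 (inv_pos.mpr hd)
  rw [mul_zero, inv_inv, smul_eq_mul] at h
  rw [← h]
  apply setIntegral_congr_fun measurableSet_Ioi
  intro x _
  have hdne : d ≠ 0 := hd.ne'
  simp only []
  rw [show ρ * d * (d⁻¹ * x) = ρ * x by field_simp,
    show d⁻¹ * x = x / d by ring]

end aux3

/-- For fixed `M ≥ 1`, `ρ > 0` and `s < 1`, the asymptotic Mellin transform satisfies
`(1 - M_K^as(s))/d_K → (1-s)·ρ·Γ(1+1/M)` as `K → ∞`; in particular `M_K^as(s) → 1`. -/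
theorem asympMellin_limit (M : ℕ) (hM : 1 ≤ M) (ρ s : ℝ) (hρ : 0 < ρ) (hs : s < 1) :
    Tendsto
      (fun K : ℕ =>
        (1 - asympMellin M ρ s K) / ((Nat.factorial M : ℝ) / K) ^ ((1 : ℝ) / M))
      atTop (nhds ((1 - s) * ρ * Real.Gamma (1 + 1 / M)))
    ∧ Tendsto (fun K : ℕ => asympMellin M ρ s K) atTop (nhds 1) := by
  set d : ℕ → ℝ := fun K => ((Nat.factorial M : ℝ) / K) ^ ((1 : ℝ) / M) with hd
  have hMpos : (0:ℝ) < (M:ℝ) := by exact_mod_cast Nat.pos_of_ne_zero (by omega)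
  have hd0 : ∀ K, 0 ≤ d K := fun K => Real.rpow_nonneg (by positivity) _
  have hdlim : Filter.Tendsto d Filter.atTop (nhds 0) := by
    have h1 : Filter.Tendsto (fun K : ℕ => (Nat.factorial M : ℝ) / K)
        Filter.atTop (nhds 0) := tendsto_const_div_atTop_nhds_zero_nat _
    have h2 : ContinuousAt (fun t : ℝ => t ^ ((1:ℝ)/M)) 0 :=
      Real.continuousAt_rpow_const 0 _ (Or.inr (by positivity))
    have := h2.tendsto.comp h1
    have h3 : ((0:ℝ) ^ ((1:ℝ)/M)) = 0 := Real.zero_rpow (by positivity)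
    rw [h3] at this
    simpa [hd, Function.comp_def] using this
  have hdpos : ∀ K : ℕ, 1 ≤ K → 0 < d K := by
    intro K hK
    apply Real.rpow_pos_of_pos
    have : (0:ℝ) < (K:ℝ) := by exact_mod_cast hK
    positivity
  have hrw : ∀ K : ℕ, asympMellin M ρ s K = 1 + (s - 1) * ρ *
      ∫ x in Ioi (0:ℝ), (1 + ρ * x) ^ (s - 2) * Real.exp (-((x / d K) ^ M)) :=
    fun K => rfl
  have hJ := J_tendsto hM hρ hs hd0 hdlim
  have heq : ∀ᶠ K in Filter.atTop, (1 - s) * ρ *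
      (∫ y in Ioi (0:ℝ), (1 + ρ * d K * y) ^ (s - 2) * Real.exp (-(y ^ M)))
      = (1 - asympMellin M ρ s K) / d K := by
    filter_upwards [Filter.eventually_ge_atTop 1] with K hK
    have hdK := hdpos K hK
    rw [hrw K, change_var hρ hdK]
    field_simp
    ring
  have h1 : Filter.Tendsto (fun K : ℕ => (1 - asympMellin M ρ s K) / d K)
      Filter.atTop (nhds ((1 - s) * ρ * Real.Gamma (1 + 1 / M))) :=
    (hJ.const_mul ((1 - s) * ρ)).congr' heq
  refine ⟨h1, ?_⟩
  have h2 : Filter.Tendsto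
      (fun K : ℕ => 1 - ((1 - asympMellin M ρ s K) / d K) * d K)
      Filter.atTop (nhds 1) := by
    have := (tendsto_const_nhds : Filter.Tendsto (fun _ : ℕ => (1:ℝ))
      Filter.atTop (nhds 1)).sub (h1.mul hdlim)
    simpa using this
  apply h2.congr'
  filter_upwards [Filter.eventually_ge_atTop 1] with K hK
  have hne := (hdpos K hK).ne'
  rw [div_mul_cancel₀ _ hne]
  ring
end

section
/- (Theorem 2, for the multicast minimum SNR) Let M ≥ 1 be a fixed integer, let ρ > 0, and let s < 1 be real. For K ≥ 1 let X_(1)^{(K)} be the minimum of K i.i.d. Gamma(M,1) random variables. Then lim_{K→∞} [ (1 + ρ·E[X_(1)^{(K)}])^{s−1} − E[(1 + ρ·X_(1)^{(K)})^{s−1}] ] = 0. -/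
open MeasureTheory ProbabilityTheory Real Filter

lemma gamma_Iio_pos (M : ℕ) (hM : 1 ≤ M) {ε : ℝ} (hε : 0 < ε) :
    0 < gammaMeasure M 1 (Set.Iio ε) := by
  have hM0 : (0:ℝ) < M := by exact_mod_cast hM
  have hmeasPDF : Measurable (gammaPDF M 1) :=
    (measurable_gammaPDFReal M 1).ennreal_ofReal
  rw [gammaMeasure, withDensity_apply _ measurableSet_Iio]
  by_contra h
  have h0 : ∫⁻ x in Set.Iio ε, gammaPDF (M:ℝ) 1 x = 0 :=
    le_antisymm (le_of_not_gt h) (zero_le)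
  rw [lintegral_eq_zero_iff hmeasPDF] at h0
  have hsub : Set.Ioo 0 ε ⊆ {x | gammaPDF (M:ℝ) 1 x ≠ 0} := by
    intro x hx
    have := gammaPDFReal_pos hM0 one_pos hx.1
    simp [gammaPDF, ENNReal.ofReal_eq_zero, not_le, this]
  have hz : volume.restrict (Set.Iio ε) {x | gammaPDF (M:ℝ) 1 x ≠ 0} = 0 := by
    have h' := h0
    rw [Filter.EventuallyEq, ae_iff] at h'
    simpa using h'
  have hz2 : volume.restrict (Set.Iio ε) (Set.Ioo 0 ε) = 0 :=
    measure_mono_null hsub hz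
  rw [Measure.restrict_apply measurableSet_Ioo] at hz2
  have hIoo : Set.Ioo 0 ε ∩ Set.Iio ε = Set.Ioo 0 ε := by
    ext x
    simp only [Set.mem_inter_iff, Set.mem_Ioo, Set.mem_Iio, and_iff_left_iff_imp]
    exact fun hx => hx.2
  rw [hIoo, Real.volume_Ioo] at hz2
  simp only [ENNReal.ofReal_eq_zero, sub_nonpos] at hz2
  linarith

/-- Theorem 2 (for the multicast minimum SNR): if `X_0, X_1, …` is an i.i.d. sequence of
`Gamma(M,1)` random variables and `X_(1)^(K)` is the minimum of the first `K` of them,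
then for `ρ > 0` and `s < 1` the Jensen-type gap
`(1 + ρ E[X_(1)^(K)])^(s-1) - E[(1 + ρ X_(1)^(K))^(s-1)]` vanishes as `K → ∞`. -/
theorem jensen_gap_min_iid_gamma_tendsto_zero {Ω : Type*} [MeasureSpace Ω]
    [IsProbabilityMeasure (ℙ : Measure Ω)]
    (M : ℕ) (hM : 1 ≤ M) (ρ s : ℝ) (hρ : 0 < ρ) (hs : s < 1)
    (X : ℕ → Ω → ℝ)
    (hmeas : ∀ k, Measurable (X k))
    (hindep : iIndepFun X ℙ)
    (hdist : ∀ k, Measure.map (X k) ℙ = gammaMeasure M 1) :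
    Tendsto
      (fun K : ℕ =>
        (1 + ρ * ∫ ω, (⨅ k : Fin K, X k ω) ∂ℙ) ^ (s - 1)
          - ∫ ω, (1 + ρ * ⨅ k : Fin K, X k ω) ^ (s - 1) ∂ℙ)
      atTop (nhds 0) := by
  have hM0 : (0:ℝ) < M := by exact_mod_cast hM
  have hprob : IsProbabilityMeasure (gammaMeasure (M:ℝ) 1) :=
    isProbabilityMeasure_gammaMeasure hM0 one_pos
  -- a.e. nonnegativity
  have hnn : ∀ᵐ ω ∂ℙ, ∀ k, 0 ≤ X k ω := by
    rw [ae_all_iff]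
    intro k
    have hz : ℙ (X k ⁻¹' Set.Iio 0) = 0 := by
      rw [← Measure.map_apply (hmeas k) measurableSet_Iio, hdist k,
        gammaMeasure, withDensity_apply _ measurableSet_Iio,
        lintegral_gammaPDF_of_nonpos le_rfl]
    have hset : {ω | ¬ 0 ≤ X k ω} = X k ⁻¹' Set.Iio 0 := by
      ext ω; simp [not_le]
    rw [ae_iff, hset]; exact hz
  -- the key zero-probability events
  have key : ∀ ε : ℝ, 0 < ε → ℙ {ω | ∀ k, ε ≤ X k ω} = 0 := by
    intro ε hε
    set p := gammaMeasure (M:ℝ) 1 (Set.Ici ε) with hp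
    have hplt : p < 1 := by
      have hc : p = 1 - gammaMeasure (M:ℝ) 1 (Set.Iio ε) := by
        rw [hp, ← Set.compl_Iio, prob_compl_eq_one_sub measurableSet_Iio]
      rw [hc]
      exact ENNReal.sub_lt_self ENNReal.one_ne_top one_ne_zero
        (gamma_Iio_pos M hM hε).ne'
    have hfac : ∀ i : ℕ, ℙ (X i ⁻¹' Set.Ici ε) = p := by
      intro i
      rw [← Measure.map_apply (hmeas i) measurableSet_Ici, hdist i]
    have hK : ∀ K : ℕ, ℙ (⋂ k ∈ Finset.range K, X k ⁻¹' Set.Ici ε) = p ^ K := by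
      intro K
      rw [hindep.meas_biInter (fun i _ => ⟨Set.Ici ε, measurableSet_Ici, rfl⟩)]
      rw [Finset.prod_congr rfl (fun i _ => hfac i), Finset.prod_const,
        Finset.card_range]
    have hle : ∀ K : ℕ, ℙ {ω | ∀ k, ε ≤ X k ω} ≤ p ^ K := by
      intro K
      refine (measure_mono ?_).trans_eq (hK K)
      intro ω hω
      simp only [Set.mem_iInter]
      exact fun k _ => hω k
    have htend : Tendsto (fun K : ℕ => p ^ K) atTop (nhds 0) :=
      ENNReal.tendsto_pow_atTop_nhds_zero_of_lt_one hplt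
    exact le_antisymm (ge_of_tendsto' htend hle) (zero_le)
  -- a.e. convergence of the minimum to 0
  have h2 : ∀ᵐ ω ∂ℙ, ∀ n : ℕ, ∃ k, X k ω < 1 / (n + 1) := by
    rw [ae_all_iff]
    intro n
    have h := key (1 / (n + 1)) (by positivity)
    rw [ae_iff]
    have hset : {ω | ¬ ∃ k, X k ω < 1 / ((n:ℝ) + 1)} = {ω | ∀ k, 1 / ((n:ℝ) + 1) ≤ X k ω} := by
      ext ω; simp [not_lt]
    rw [hset]; exact h
  have hconv : ∀ᵐ ω ∂ℙ, Tendsto (fun K : ℕ => ⨅ k : Fin K, X k ω) atTop (nhds 0) := by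
    filter_upwards [hnn, h2] with ω h0 hseq
    rw [tendsto_order]
    constructor
    · intro b hb
      filter_upwards [eventually_ge_atTop 1] with K hK
      have hne : Nonempty (Fin K) := ⟨⟨0, hK⟩⟩
      have : (0:ℝ) ≤ ⨅ k : Fin K, X k ω := le_ciInf fun k => h0 k
      linarith
    · intro b hb
      obtain ⟨n, hn⟩ := exists_nat_one_div_lt hb
      obtain ⟨k, hk⟩ := hseq n
      filter_upwards [eventually_ge_atTop (k + 1)] with K hK
      have hbdd : BddBelow (Set.range fun j : Fin K => X j ω) :=
        (Set.finite_range _).bddBelow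
      have hle : (⨅ j : Fin K, X j ω) ≤ X k ω :=
        ciInf_le hbdd (⟨k, by omega⟩ : Fin K)
      calc (⨅ j : Fin K, X j ω) ≤ X k ω := hle
        _ < 1 / (n + 1) := hk
        _ < b := hn
  -- measurability of the minima
  have hameas : ∀ K : ℕ, Measurable fun ω => ⨅ k : Fin K, X k ω :=
    fun K => Measurable.iInf fun k => hmeas k
  -- a.e. bounds for the minima
  have hbnd : ∀ᵐ ω ∂ℙ, ∀ K : ℕ,
      0 ≤ (⨅ k : Fin K, X k ω) ∧ (⨅ k : Fin K, X k ω) ≤ |X 0 ω| := by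
    filter_upwards [hnn] with ω h0
    intro K
    rcases Nat.eq_zero_or_pos K with hK | hK
    · subst hK
      simp [Real.iInf_of_isEmpty, abs_nonneg]
    · have hne : Nonempty (Fin K) := ⟨⟨0, hK⟩⟩
      refine ⟨le_ciInf fun k => h0 k, ?_⟩
      have hbdd : BddBelow (Set.range fun j : Fin K => X j ω) :=
        (Set.finite_range _).bddBelow
      exact (ciInf_le hbdd (⟨0, hK⟩ : Fin K)).trans (le_abs_self _)
  -- integrability of X 0
  have hint : Integrable (X 0) ℙ := by
    refine ⟨(hmeas 0).aestronglyMeasurable, ?_⟩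
    rw [hasFiniteIntegral_iff_norm]
    have hmap : ∫⁻ ω, ENNReal.ofReal ‖X 0 ω‖ ∂ℙ
        = ∫⁻ x, ENNReal.ofReal ‖x‖ ∂(gammaMeasure (M:ℝ) 1) := by
      rw [← hdist 0, lintegral_map (by fun_prop) (hmeas 0)]
    have hpdfmeas : Measurable (gammaPDF (M:ℝ) 1) :=
      (measurable_gammaPDFReal M 1).ennreal_ofReal
    have hnrm : Measurable fun x : ℝ => ENNReal.ofReal ‖x‖ :=
      measurable_norm.ennreal_ofReal
    rw [hmap, gammaMeasure, lintegral_withDensity_eq_lintegral_mul _ hpdfmeas hnrm]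
    have heq : ∀ x : ℝ, 0 ≤ x →
        gammaPDFReal (M:ℝ) 1 x * x = M * gammaPDFReal ((M:ℝ) + 1) 1 x := by
      intro x hx
      have h1 : ((M:ℝ) + 1 - 1) = (M:ℝ) := by ring
      rcases eq_or_lt_of_le hx with hx0 | hx0
      · rw [← hx0]
        simp [gammaPDFReal, h1, Real.zero_rpow hM0.ne']
      · have hΓ : Real.Gamma ((M:ℝ) + 1) = M * Real.Gamma M := Real.Gamma_add_one hM0.ne'
        have hΓpos : 0 < Real.Gamma (M:ℝ) := Real.Gamma_pos_of_pos hM0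
        have hxp : x ^ (M:ℝ) = x ^ ((M:ℝ) - 1) * x := by
          have h := Real.rpow_add_one hx0.ne' ((M:ℝ) - 1)
          rw [sub_add_cancel] at h
          exact h
        simp only [gammaPDFReal, if_pos hx, Real.one_rpow, h1, hxp, hΓ]
        field_simp
    have hpt : ∀ x : ℝ, gammaPDF (M:ℝ) 1 x * ENNReal.ofReal ‖x‖
        ≤ ENNReal.ofReal M * gammaPDF ((M:ℝ) + 1) 1 x := by
      intro x
      rcases lt_or_ge x 0 with hx | hx
      · simp [gammaPDF_of_neg hx]
      · simp only [Real.norm_eq_abs, abs_of_nonneg hx]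
        rw [show gammaPDF (M:ℝ) 1 x = ENNReal.ofReal (gammaPDFReal (M:ℝ) 1 x) from rfl,
          show gammaPDF ((M:ℝ)+1) 1 x = ENNReal.ofReal (gammaPDFReal ((M:ℝ)+1) 1 x) from rfl,
          ← ENNReal.ofReal_mul (gammaPDFReal_nonneg hM0 one_pos x),
          ← ENNReal.ofReal_mul (by positivity : (0:ℝ) ≤ (M:ℝ))]
        exact ENNReal.ofReal_le_ofReal (le_of_eq (heq x hx))
    simp only [Pi.mul_apply]
    refine lt_of_le_of_lt (lintegral_mono hpt) ?_
    have hpdf2 : Measurable (gammaPDF ((M:ℝ) + 1) 1) :=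
      (measurable_gammaPDFReal _ _).ennreal_ofReal
    rw [lintegral_const_mul _ hpdf2,
      lintegral_gammaPDF_eq_one (by positivity) one_pos, mul_one]
    exact ENNReal.ofReal_lt_top
  -- expectations of minima tend to 0
  have hInt1 : Tendsto (fun K : ℕ => ∫ ω, (⨅ k : Fin K, X k ω) ∂ℙ) atTop (nhds 0) := by
    have h := tendsto_integral_of_dominated_convergence (μ := ℙ)
      (F := fun (K : ℕ) ω => ⨅ k : Fin K, X k ω) (f := fun _ => (0:ℝ))
      (fun ω => |X 0 ω|)
      (fun K => (hameas K).aestronglyMeasurable) hint.abs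
      (fun K => by
        filter_upwards [hbnd] with ω h
        rw [Real.norm_eq_abs, abs_of_nonneg (h K).1]
        exact (h K).2)
      hconv
    simpa using h
  have hcont : ContinuousAt (fun t : ℝ => (1 + ρ * t) ^ (s - 1)) 0 := by
    apply ContinuousAt.rpow_const
    · fun_prop
    · left; norm_num
  have hT1 : Tendsto (fun K : ℕ =>
      (1 + ρ * ∫ ω, (⨅ k : Fin K, X k ω) ∂ℙ) ^ (s - 1)) atTop (nhds 1) := by
    have h := hcont.tendsto.comp hInt1
    simpa [Function.comp_def] using h
  have hT2 : Tendsto (fun K : ℕ =>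
      ∫ ω, (1 + ρ * ⨅ k : Fin K, X k ω) ^ (s - 1) ∂ℙ) atTop (nhds 1) := by
    have h := tendsto_integral_of_dominated_convergence (μ := ℙ)
      (F := fun (K : ℕ) ω => (1 + ρ * ⨅ k : Fin K, X k ω) ^ (s - 1))
      (f := fun _ => (1:ℝ)) (fun _ => (1:ℝ))
      (fun K => ((((hameas K).const_mul ρ).const_add 1).pow_const (s-1)).aestronglyMeasurable)
      (integrable_const 1)
      (fun K => by
        filter_upwards [hbnd] with ω h
        have h0 := (h K).1
        have h1 : (1:ℝ) ≤ 1 + ρ * ⨅ k : Fin K, X k ω := by nlinarith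
        rw [Real.norm_eq_abs, abs_of_nonneg (Real.rpow_nonneg (by linarith) _)]
        exact Real.rpow_le_one_of_one_le_of_nonpos h1 (by linarith))
      (by
        filter_upwards [hconv] with ω hω
        have h := hcont.tendsto.comp hω
        simpa [Function.comp_def] using h)
    simpa using h
  have hfin := hT1.sub hT2
  simpa using hfin
end

section
/- (Scaling: finite K, increasing M) Let K ≥ 1 be a fixed integer, let P > 0, and let s be real. For each integer M ≥ 1 let X_(1)^{(M)} be the minimum of K i.i.d. Gamma(M,1) random variables. Then lim_{M→∞} E[(1 + (P/M)·X_(1)^{(M)})^{s−1}] = (1+P)^{s−1}. -/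
open scoped ENNReal
open MeasureTheory ProbabilityTheory Real Filter Set

namespace MellinAux

lemma glint_exp {M : ℕ} (hM : 1 ≤ M) {φ : ℝ → ℝ≥0∞} {c C : ℝ} (hc : c < 1) (hC : 0 ≤ C)
    (h : ∀ z : ℝ, 0 < z → φ z ≤ ENNReal.ofReal (C * Real.exp (c * z))) :
    ∫⁻ z, φ z ∂(gammaMeasure M 1) ≤ ENNReal.ofReal (C * ((1 - c)⁻¹) ^ M) := by
  have hMpos : (0:ℝ) < M := by exact_mod_cast hM
  have hΓ : 0 < Real.Gamma M := Real.Gamma_pos_of_pos hMpos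
  have hr : (0:ℝ) < 1 - c := by linarith
  rw [gammaMeasure, lintegral_withDensity_eq_lintegral_mul_non_measurable _
      (show Measurable (gammaPDF (M:ℝ) 1) from (measurable_gammaPDFReal _ _).ennreal_ofReal) (ae_of_all _ fun z => ENNReal.ofReal_lt_top)]
  have hae : ∀ᵐ z : ℝ, (gammaPDF M 1 * φ) z ≤
      (Ioi (0:ℝ)).indicator
        (fun z => ENNReal.ofReal ((C / Real.Gamma M) * (z ^ ((M:ℝ)-1) * Real.exp (-((1-c) * z))))) z := by
    filter_upwards [compl_mem_ae_iff.mpr (volume_singleton (a := (0:ℝ)))] with z hz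
    simp only [Pi.mul_apply]
    rcases lt_trichotomy z 0 with h0 | h0 | h0
    · rw [gammaPDF_of_neg h0]; simp
    · exact absurd (by simp [h0]) hz
    · rw [Set.indicator_of_mem (mem_Ioi.mpr h0), gammaPDF_of_nonneg h0.le]
      calc ENNReal.ofReal ((1:ℝ) ^ (M:ℝ) / Real.Gamma M * z ^ ((M:ℝ)-1) * Real.exp (-(1 * z))) * φ z
          ≤ ENNReal.ofReal ((1:ℝ) ^ (M:ℝ) / Real.Gamma M * z ^ ((M:ℝ)-1) * Real.exp (-(1 * z))) *
            ENNReal.ofReal (C * Real.exp (c * z)) := by gcongr; exact h z h0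
        _ = ENNReal.ofReal (((1:ℝ) ^ (M:ℝ) / Real.Gamma M * z ^ ((M:ℝ)-1) * Real.exp (-(1 * z))) *
            (C * Real.exp (c * z))) := by
            rw [← ENNReal.ofReal_mul]; positivity
        _ = ENNReal.ofReal ((C / Real.Gamma M) * (z ^ ((M:ℝ)-1) * Real.exp (-((1-c) * z)))) := by
            congr 1
            have he : Real.exp (-(1 * z)) * Real.exp (c * z) = Real.exp (-((1-c) * z)) := by
              rw [← Real.exp_add]; congr 1; ring
            rw [Real.one_rpow]
            linear_combination (z ^ ((M:ℝ)-1) * C / Real.Gamma M) * he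
  calc ∫⁻ z, (gammaPDF M 1 * φ) z
      ≤ ∫⁻ z, (Ioi (0:ℝ)).indicator
        (fun z => ENNReal.ofReal ((C / Real.Gamma M) * (z ^ ((M:ℝ)-1) * Real.exp (-((1-c) * z))))) z :=
        lintegral_mono_ae hae
    _ = ∫⁻ z in Ioi (0:ℝ),
        ENNReal.ofReal ((C / Real.Gamma M) * (z ^ ((M:ℝ)-1) * Real.exp (-((1-c) * z)))) :=
        lintegral_indicator measurableSet_Ioi _
    _ = ENNReal.ofReal (∫ z in Ioi (0:ℝ),
        (C / Real.Gamma M) * (z ^ ((M:ℝ)-1) * Real.exp (-((1-c) * z)))) := by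
        rw [ofReal_integral_eq_lintegral_ofReal]
        · have hint : IntegrableOn (fun z : ℝ => z ^ ((M:ℝ)-1) * Real.exp (-((1-c) * z))) (Ioi 0) := by
            have := integrableOn_rpow_mul_exp_neg_mul_rpow
              (by linarith : (-1:ℝ) < (M:ℝ)-1) one_pos hr
            refine this.congr_fun (fun x hx => ?_) measurableSet_Ioi
            simp only [Real.rpow_one]; ring_nf
          exact hint.const_mul _
        · refine (ae_restrict_iff' measurableSet_Ioi).mpr (ae_of_all _ fun z hz => ?_)
          have : (0:ℝ) < z := hz
          positivity
    _ = ENNReal.ofReal (C * ((1 - c)⁻¹) ^ M) := by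
        rw [MeasureTheory.integral_const_mul, integral_rpow_mul_exp_neg_mul_Ioi hMpos hr]
        congr 1
        rw [one_div, Real.rpow_natCast]
        field_simp

noncomputable def dlt (ε : ℝ) : ℝ := ε / (2 * (1 + ε)^2)

noncomputable def qU (ε : ℝ) : ℝ :=
  Real.exp (-(dlt ε * (1 + ε))) * (1 - dlt ε * (1 + ε/2))⁻¹

noncomputable def qL (ε : ℝ) : ℝ := Real.exp (ε * (1 - ε)) * (1 + ε)⁻¹

lemma dlt_pos {ε : ℝ} (hε : 0 < ε) : 0 < dlt ε := by
  unfold dlt; positivity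

lemma dlt_lt {ε : ℝ} (hε : 0 < ε) : dlt ε * (1 + ε/2) < 1 := by
  unfold dlt
  rw [div_mul_eq_mul_div, div_lt_one (by positivity)]
  nlinarith [sq_nonneg ε, sq_nonneg (1+ε)]

lemma qU_pos {ε : ℝ} (hε : 0 < ε) : 0 < qU ε := by
  have h := dlt_lt hε
  have : (0:ℝ) < 1 - dlt ε * (1 + ε/2) := by linarith
  unfold qU
  positivity

lemma qU_lt_one {ε : ℝ} (hε : 0 < ε) : qU ε < 1 := by
  have h1 : dlt ε * (1 + ε/2) < 1 := dlt_lt hε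
  have h2 : 0 < dlt ε := dlt_pos hε
  have key : Real.exp (-(dlt ε * (1 + ε))) < 1 - dlt ε * (1 + ε/2) := by
    have hle : Real.exp (-(dlt ε * (1 + ε))) ≤ (1 + dlt ε * (1 + ε))⁻¹ := by
      rw [Real.exp_neg]
      have := Real.add_one_le_exp (dlt ε * (1 + ε))
      have hpos : (0:ℝ) < 1 + dlt ε * (1 + ε) := by nlinarith
      rw [inv_le_inv₀ (Real.exp_pos _) hpos]
      linarith
    refine hle.trans_lt ?_
    have hA : (0:ℝ) < 1 + dlt ε * (1 + ε) := by nlinarith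
    have hδeq : dlt ε * (2 * (1 + ε)^2) = ε := by
      unfold dlt; field_simp
    rw [← one_div, div_lt_iff₀ hA]
    nlinarith [mul_pos h2 hε, sq_nonneg (1+ε), mul_pos (mul_pos h2 h2) hε]
  have h3 : 0 < 1 - dlt ε * (1 + ε/2) := by linarith
  calc qU ε < (1 - dlt ε * (1 + ε/2)) * (1 - dlt ε * (1 + ε/2))⁻¹ := by
        unfold qU; gcongr
      _ = 1 := mul_inv_cancel₀ h3.ne'

lemma qL_pos {ε : ℝ} (hε : 0 < ε) : 0 < qL ε := by
  unfold qL; positivity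

lemma qL_lt_one {ε : ℝ} (hε : 0 < ε) (hε1 : ε < 1) : qL ε < 1 := by
  have hy : ε * (1 - ε) < 1 := by nlinarith
  have h0 : (0:ℝ) < 1 - ε * (1 - ε) := by linarith
  have hle : Real.exp (ε * (1 - ε)) ≤ (1 - ε * (1 - ε))⁻¹ := by
    have h3 : 1 - ε * (1 - ε) ≤ (Real.exp (ε * (1 - ε)))⁻¹ := by
      rw [← Real.exp_neg]
      have h2 := Real.add_one_le_exp (-(ε * (1 - ε)))
      linarith
    rw [inv_eq_one_div, le_div_iff₀ h0]
    calc Real.exp (ε * (1 - ε)) * (1 - ε * (1 - ε))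
        ≤ Real.exp (ε * (1 - ε)) * (Real.exp (ε * (1 - ε)))⁻¹ := by
          gcongr
      _ = 1 := mul_inv_cancel₀ (Real.exp_pos _).ne'
  have hlt : (1 - ε * (1 - ε))⁻¹ < 1 + ε := by
    rw [← one_div, div_lt_iff₀ h0]
    nlinarith [mul_pos (mul_pos hε hε) hε]
  have hkey : Real.exp (ε * (1 - ε)) < 1 + ε := lt_of_le_of_lt hle hlt
  unfold qL
  calc Real.exp (ε * (1 - ε)) * (1 + ε)⁻¹ < (1 + ε) * (1 + ε)⁻¹ :=
        mul_lt_mul_of_pos_right hkey (by positivity)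
    _ = 1 := mul_inv_cancel₀ (by positivity)

/-- Lower tail bound for polynomial integrand against the Gamma(M,1) measure. -/
lemma gamma_lower {M : ℕ} (hM : 1 ≤ M) {ε Q : ℝ} (hε : 0 < ε) (hε1 : ε < 1) (hQ : 1 ≤ Q) (n : ℕ) :
    ∫⁻ z in Iio ((1-ε)*M), ENNReal.ofReal ((Q*(1+z/(M:ℝ)))^n) ∂(gammaMeasure M 1)
      ≤ ENNReal.ofReal ((2*Q)^n * qL ε ^ M) := by
  have hMpos : (0:ℝ) < M := by exact_mod_cast hM
  rw [← lintegral_indicator measurableSet_Iio]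
  have key := glint_exp (φ := (Iio ((1-ε)*(M:ℝ))).indicator
      (fun z => ENNReal.ofReal ((Q*(1+z/(M:ℝ)))^n)))
      (c := -ε) (C := (2*Q)^n * Real.exp (ε * ((1-ε)*M))) hM
      (by linarith) (by positivity) ?_
  · refine key.trans (le_of_eq ?_)
    congr 1
    have h1 : ((1:ℝ) - -ε)⁻¹ = (1+ε)⁻¹ := by norm_num
    rw [h1, mul_assoc]
    congr 1
    rw [qL, mul_pow, ← Real.exp_nat_mul]
    ring_nf
  · intro z hz
    by_cases hmem : z ∈ Iio ((1-ε)*(M:ℝ))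
    · rw [Set.indicator_of_mem hmem]
      apply ENNReal.ofReal_le_ofReal
      have hzl : z < (1-ε)*M := hmem
      have hb : Q*(1+z/(M:ℝ)) ≤ 2*Q := by
        have : z / M ≤ 1 := by
          rw [div_le_one hMpos]; nlinarith
        nlinarith
      have hb0 : (0:ℝ) ≤ Q*(1+z/(M:ℝ)) := by
        have : 0 ≤ z / M := by positivity
        nlinarith
      have hexp : (1:ℝ) ≤ Real.exp (ε * ((1-ε)*M)) * Real.exp (-ε * z) := by
        rw [← Real.exp_add]
        exact Real.one_le_exp (by nlinarith)
      calc (Q*(1+z/(M:ℝ)))^n ≤ (2*Q)^n := pow_le_pow_left₀ hb0 hb n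
        _ = (2*Q)^n * 1 := (mul_one _).symm
        _ ≤ (2*Q)^n * (Real.exp (ε * ((1-ε)*M)) * Real.exp (-ε * z)) := by
            gcongr
        _ = (2*Q)^n * Real.exp (ε * ((1-ε)*M)) * Real.exp (-ε * z) := by ring
    · rw [Set.indicator_of_notMem hmem]
      exact zero_le

/-- Upper tail bound for polynomial integrand against the Gamma(M,1) measure. -/
lemma gamma_upper {M : ℕ} (hM : 1 ≤ M) {ε Q : ℝ} (hε : 0 < ε) (hQ : 1 ≤ Q) (n : ℕ) :
    ∫⁻ z in Ioi ((1+ε)*M), ENNReal.ofReal ((Q*(1+z/(M:ℝ)))^n) ∂(gammaMeasure M 1)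
      ≤ ENNReal.ofReal ((2*Q)^n * n.factorial / (dlt ε * ε / 2)^n * qU ε ^ M) := by
  have hMpos : (0:ℝ) < M := by exact_mod_cast hM
  have hM1 : (1:ℝ) ≤ M := by exact_mod_cast hM
  set δ := dlt ε with hδdef
  have hδ : 0 < δ := dlt_pos hε
  set β := δ * ε / 2 with hβdef
  have hβ : 0 < β := by positivity
  have hδ' : δ + β = δ * (1 + ε/2) := by rw [hβdef]; ring
  have hδ'lt : δ + β < 1 := by rw [hδ']; exact dlt_lt hε
  rw [← lintegral_indicator measurableSet_Ioi]
  have key := glint_exp (φ := (Ioi ((1+ε)*(M:ℝ))).indicator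
      (fun z => ENNReal.ofReal ((Q*(1+z/(M:ℝ)))^n)))
      (c := δ + β) (C := (2*Q)^n * n.factorial / β^n * Real.exp (-(δ * ((1+ε)*M)))) hM
      hδ'lt (by positivity) ?_
  · refine key.trans (le_of_eq ?_)
    congr 1
    rw [qU]
    have hexpeq : Real.exp (-(δ * ((1+ε)*(M:ℝ)))) = Real.exp (-(δ*(1+ε)))^M := by
      rw [← Real.exp_nat_mul]; congr 1; ring
    rw [hexpeq, hδ', mul_pow]
    ring
  · intro z hz
    by_cases hmem : z ∈ Ioi ((1+ε)*(M:ℝ))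
    · rw [Set.indicator_of_mem hmem]
      apply ENNReal.ofReal_le_ofReal
      have hzu : (1+ε)*M < z := hmem
      have hz1 : (1:ℝ) ≤ z := by nlinarith
      have hb : Q*(1+z/(M:ℝ)) ≤ 2*Q*z := by
        have h1 : z / M ≤ z := by
          rw [div_le_iff₀ hMpos]; nlinarith
        nlinarith
      have hb0 : (0:ℝ) ≤ Q*(1+z/(M:ℝ)) := by
        have : 0 ≤ z / M := by positivity
        nlinarith
      have hzn : z^n ≤ n.factorial / β^n * Real.exp (β * z) := by
        have h2 := Real.pow_div_factorial_le_exp (x := β * z) (by positivity) n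
        rw [div_le_iff₀ (by positivity : (0:ℝ) < (n.factorial : ℝ))] at h2
        rw [div_mul_eq_mul_div, le_div_iff₀ (by positivity : (0:ℝ) < β^n)]
        calc z^n * β^n = (β*z)^n := by rw [mul_pow]; ring
          _ ≤ Real.exp (β * z) * n.factorial := h2
          _ = (n.factorial : ℝ) * Real.exp (β * z) := by ring
      have hexp : (1:ℝ) ≤ Real.exp (-(δ * ((1+ε)*M))) * Real.exp (δ * z) := by
        rw [← Real.exp_add]
        exact Real.one_le_exp (by nlinarith)
      calc (Q*(1+z/(M:ℝ)))^n ≤ (2*Q*z)^n := pow_le_pow_left₀ hb0 hb n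
        _ = (2*Q)^n * z^n := by rw [mul_pow]
        _ ≤ (2*Q)^n * (n.factorial / β^n * Real.exp (β * z)) := by
            have : (0:ℝ) ≤ (2*Q)^n := by positivity
            exact mul_le_mul_of_nonneg_left hzn this
        _ = ((2*Q)^n * n.factorial / β^n * Real.exp (β * z)) * 1 := by ring
        _ ≤ ((2*Q)^n * n.factorial / β^n * Real.exp (β * z)) *
            (Real.exp (-(δ * ((1+ε)*M))) * Real.exp (δ * z)) := by
            have h0 : (0:ℝ) ≤ (2*Q)^n * n.factorial / β^n * Real.exp (β * z) := by positivity
            exact mul_le_mul_of_nonneg_left hexp h0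
        _ = (2*Q)^n * n.factorial / β^n * Real.exp (-(δ * ((1+ε)*M))) *
            Real.exp ((δ + β) * z) := by
            have hsplit : Real.exp ((δ + β) * z) = Real.exp (β * z) * Real.exp (δ * z) := by
              rw [← Real.exp_add]; congr 1; ring
            rw [hsplit]; ring
    · rw [Set.indicator_of_notMem hmem]
      exact zero_le

lemma gamma_Iic_zero (a r : ℝ) : gammaMeasure a r (Iic 0) = 0 := by
  rw [gammaMeasure, withDensity_apply _ measurableSet_Iic,
    Measure.restrict_congr_set Iio_ae_eq_Iic.symm]
  exact lintegral_gammaPDF_of_nonpos le_rfl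

lemma gamma_Iio_le {M : ℕ} (hM : 1 ≤ M) {ε : ℝ} (hε : 0 < ε) (hε1 : ε < 1) :
    gammaMeasure M 1 (Iio ((1-ε)*M)) ≤ ENNReal.ofReal (qL ε ^ M) := by
  have h := gamma_lower (Q := 1) hM hε hε1 le_rfl 0
  simpa using h

lemma gamma_Ioi_le {M : ℕ} (hM : 1 ≤ M) {ε : ℝ} (hε : 0 < ε) :
    gammaMeasure M 1 (Ioi ((1+ε)*M)) ≤ ENNReal.ofReal (qU ε ^ M) := by
  have h := gamma_upper (Q := 1) hM hε le_rfl 0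
  simpa using h

end MellinAux

set_option maxHeartbeats 2000000 in
open MellinAux in
/-- Scaling with finite `K` and increasing `M`: for each `M ≥ 1` let `X_(1)^(M)` be the
minimum of `K` i.i.d. `Gamma(M,1)` random variables. Then
`E[(1 + (P/M) X_(1)^(M))^(s-1)] → (1+P)^(s-1)` as `M → ∞`. -/
theorem mellin_fixed_users_many_antennas_limit {Ω : Type*} [MeasureSpace Ω]
    [IsProbabilityMeasure (ℙ : Measure Ω)]
    (K : ℕ) (hK : 1 ≤ K) (P : ℝ) (hP : 0 < P) (s : ℝ)
    (X : ℕ → Fin K → Ω → ℝ)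
    (hmeas : ∀ M k, Measurable (X M k))
    (hindep : ∀ M, iIndepFun (X M) ℙ)
    (hdist : ∀ M, 1 ≤ M → ∀ k, Measure.map (X M k) ℙ = gammaMeasure M 1) :
    Tendsto
      (fun M : ℕ => ∫ ω, (1 + P / M * ⨅ k : Fin K, X M k ω) ^ (s - 1) ∂ℙ)
      atTop (nhds ((1 + P) ^ (s - 1))) := by
  classical
  have hK0 : Nonempty (Fin K) := ⟨⟨0, hK⟩⟩
  set t : ℝ := s - 1 with ht
  set c : ℝ := (1 + P) ^ t with hcdef
  have hcpos : 0 < c := Real.rpow_pos_of_pos (by linarith) _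
  set n : ℕ := ⌈t⌉₊ with hn
  rw [Metric.tendsto_nhds]
  intro δ hδ
  -- continuity at 1
  have hcont : ContinuousAt (fun x : ℝ => (1 + P * x) ^ t) 1 := by
    refine ContinuousAt.rpow_const ?_ (Or.inl ?_)
    · exact (continuous_const.add (continuous_const.mul continuous_id)).continuousAt
    · simp only [mul_one]; positivity
  obtain ⟨η, hη, hcball⟩ := Metric.continuousAt_iff.mp hcont (δ/4) (by positivity)
  set ε : ℝ := min (η/2) (1/2) with hεdef
  have hεpos : 0 < ε := lt_min (by positivity) one_half_pos
  have hε1 : ε < 1 := lt_of_le_of_lt (min_le_right _ _) (by norm_num)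
  have hεη : ∀ x : ℝ, |x - 1| ≤ ε → |(1 + P * x) ^ t - c| < δ/4 := by
    intro x hx
    have hd : dist x 1 < η := by
      rw [Real.dist_eq]
      have h1 : ε ≤ η/2 := min_le_left _ _
      linarith [hx]
    have h2 := hcball hd
    rw [Real.dist_eq] at h2
    simpa [mul_one, ← hcdef] using h2
  set Q : ℝ := 1 + P with hQdef
  have hQ : 1 ≤ Q := by rw [hQdef]; linarith
  set AL : ℝ := (2*Q)^n with hALdef
  set AU : ℝ := (2*Q)^n * (n.factorial : ℝ) / (dlt ε * ε / 2)^n with hAUdef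
  have hALpos : 0 < AL := by rw [hALdef]; positivity
  have hAUpos : 0 < AU := by
    rw [hAUdef]
    have := dlt_pos hεpos
    positivity
  have hqLt := tendsto_pow_atTop_nhds_zero_of_lt_one (qL_pos hεpos).le (qL_lt_one hεpos hε1)
  have hqUt := tendsto_pow_atTop_nhds_zero_of_lt_one (qU_pos hεpos).le (qU_lt_one hεpos)
  set δ' : ℝ := δ / (4 * (c + 1)) with hδ'def
  have hδ'pos : 0 < δ' := by rw [hδ'def]; positivity
  have hR : Tendsto (fun M : ℕ => (K:ℝ) * (AL * qL ε ^ M + AU * qU ε ^ M)) atTop (nhds 0) := by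
    have := ((hqLt.const_mul AL).add (hqUt.const_mul AU)).const_mul (K:ℝ)
    simpa using this
  have hR' : Tendsto (fun M : ℕ => (K:ℝ) * (qL ε ^ M + qU ε ^ M)) atTop (nhds 0) := by
    have := (hqLt.add hqUt).const_mul (K:ℝ)
    simpa using this
  have hE1 : ∀ᶠ M : ℕ in atTop, (K:ℝ) * (AL * qL ε ^ M + AU * qU ε ^ M) ≤ δ/4 :=
    hR.eventually (eventually_le_nhds (by positivity))
  have hE2 : ∀ᶠ M : ℕ in atTop, (K:ℝ) * (qL ε ^ M + qU ε ^ M) ≤ δ' :=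
    hR'.eventually (eventually_le_nhds hδ'pos)
  filter_upwards [eventually_ge_atTop 1, hE1, hE2] with M hM hEM1 hEM2
  -- the per-M estimate
  have hMpos : (0:ℝ) < M := by exact_mod_cast hM
  have hmap : ∀ k, Measure.map (X M k) ℙ = gammaMeasure M 1 := hdist M hM
  set l : ℝ := (1-ε)*(M:ℝ) with hldef
  set u : ℝ := (1+ε)*(M:ℝ) with hudef
  have hlu : l ≤ u := by rw [hldef, hudef]; nlinarith
  set m : Ω → ℝ := fun ω => ⨅ k, X M k ω with hmdef
  have hmmeas : Measurable m := Measurable.iInf (fun k => hmeas M k)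
  set f : Ω → ℝ := fun ω => (1 + P / M * m ω) ^ t with hfdef
  have hfmeas : Measurable f :=
    (measurable_const.add (hmmeas.const_mul (P / M))).pow_const t
  have hposk : ∀ᵐ ω ∂ℙ, ∀ k, 0 < X M k ω := by
    rw [ae_all_iff]
    intro k
    have h0 : ℙ ((X M k) ⁻¹' (Iic 0)) = 0 := by
      rw [← Measure.map_apply (hmeas M k) measurableSet_Iic, hmap k]
      exact gamma_Iic_zero _ _
    rw [ae_iff]
    refine measure_mono_null (fun ω hω => ?_) h0
    simp only [mem_setOf_eq, not_lt] at hω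
    exact hω
  -- pointwise facts
  have hbdd : ∀ ω, BddBelow (Set.range fun k => X M k ω) :=
    fun ω => (Set.finite_range _).bddBelow
  have hptf : ∀ ω, (∀ k, 0 < X M k ω) →
      (0 ≤ m ω ∧ 1 ≤ 1 + P / M * m ω ∧ 0 < f ω ∧
        ∀ k, f ω ≤ (Q * (1 + X M k ω / M))^n) := by
    intro ω h1
    have hm0 : 0 ≤ m ω := le_ciInf fun k => (h1 k).le
    have hb1 : 1 ≤ 1 + P / M * m ω := by
      have : 0 ≤ P / M * m ω := by positivity
      linarith
    refine ⟨hm0, hb1, Real.rpow_pos_of_pos (by linarith) _, fun k => ?_⟩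
    have hmk : m ω ≤ X M k ω := ciInf_le (hbdd ω) k
    have hble : 1 + P / M * m ω ≤ Q * (1 + X M k ω / M) := by
      have hx : 0 < X M k ω / M := div_pos (h1 k) hMpos
      have h2 : P / M * m ω ≤ P * (X M k ω / M) := by
        have : P / M * m ω ≤ P / M * X M k ω := by
          apply mul_le_mul_of_nonneg_left hmk (by positivity)
        calc P / M * m ω ≤ P / M * X M k ω := this
          _ = P * (X M k ω / M) := by ring
      rw [hQdef]
      nlinarith
    calc f ω = (1 + P / M * m ω) ^ t := rfl
      _ ≤ (1 + P / M * m ω) ^ (n:ℝ) :=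
          Real.rpow_le_rpow_of_exponent_le hb1 (Nat.le_ceil t)
      _ = (1 + P / M * m ω) ^ n := Real.rpow_natCast _ n
      _ ≤ (Q * (1 + X M k ω / M))^n := pow_le_pow_left₀ (by linarith) hble n
  set B : Set Ω := ⋂ k, (X M k) ⁻¹' (Icc l u) with hBdef
  have hB : MeasurableSet B :=
    MeasurableSet.iInter fun k => (hmeas M k) measurableSet_Icc
  have hBc : Bᶜ = ⋃ k, (X M k) ⁻¹' ((Icc l u)ᶜ) := by
    rw [hBdef, compl_iInter]
    simp [Set.preimage_compl]
  -- on B, f is within δ/4 of c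
  have hfB : ∀ ω, (∀ k, 0 < X M k ω) → ω ∈ B → |f ω - c| ≤ δ/4 := by
    intro ω h1 hωB
    have hωB' : ∀ k, X M k ω ∈ Icc l u := by
      intro k; exact mem_iInter.mp hωB k
    have hml : l ≤ m ω := le_ciInf fun k => (hωB' k).1
    have hmu : m ω ≤ u := (ciInf_le (hbdd ω) ⟨0, hK⟩).trans (hωB' ⟨0, hK⟩).2
    have hx : |m ω / M - 1| ≤ ε := by
      rw [hldef] at hml
      rw [hudef] at hmu
      have h1' : (1 - ε) ≤ m ω / M := (le_div_iff₀ hMpos).mpr hml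
      have h2' : m ω / M ≤ 1 + ε := (div_le_iff₀ hMpos).mpr hmu
      rw [abs_le]
      constructor <;> linarith
    have heq : f ω = (1 + P * (m ω / M)) ^ t := by
      rw [hfdef]; congr 2; ring
    rw [heq]
    exact (hεη _ hx).le
  -- integral to lintegral
  have hfnn : 0 ≤ᵐ[ℙ] f := by
    filter_upwards [hposk] with ω h1
    exact (hptf ω h1).2.2.1.le
  have hI : ∫ ω, f ω ∂ℙ = (∫⁻ ω, ENNReal.ofReal (f ω) ∂ℙ).toReal :=
    integral_eq_lintegral_of_nonneg_ae hfnn hfmeas.aestronglyMeasurable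
  set ℓ : ℝ≥0∞ := ∫⁻ ω, ENNReal.ofReal (f ω) ∂ℙ with hℓdef
  -- upper bound
  have hgmeas : Measurable fun z : ℝ => ENNReal.ofReal ((Q * (1 + z / M))^n) := by
    apply Measurable.ennreal_ofReal
    exact ((measurable_const.add (measurable_id.div_const _)).const_mul Q).pow_const n
  have hIccc : (Icc l u)ᶜ = Iio l ∪ Ioi u := by
    ext z
    simp only [Set.mem_compl_iff, Set.mem_Icc, not_and, not_le, Set.mem_union,
      Set.mem_Iio, Set.mem_Ioi]
    constructor
    · intro h
      rcases lt_or_ge z l with h' | h'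
      · exact Or.inl h'
      · exact Or.inr (h h')
    · rintro (h | h) hlz
      · linarith
      · exact h
  have hdisj : Disjoint (Iio l) (Ioi u) := by
    rw [Set.disjoint_left]
    intro z hz1 hz2
    simp only [mem_Iio] at hz1
    simp only [mem_Ioi] at hz2
    linarith
  have hbadk : ∀ k, ∫⁻ ω in (X M k) ⁻¹' ((Icc l u)ᶜ), ENNReal.ofReal (f ω) ∂ℙ ≤
      ENNReal.ofReal (AL * qL ε ^ M + AU * qU ε ^ M) := by
    intro k
    calc ∫⁻ ω in (X M k) ⁻¹' ((Icc l u)ᶜ), ENNReal.ofReal (f ω) ∂ℙ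
        ≤ ∫⁻ ω in (X M k) ⁻¹' ((Icc l u)ᶜ),
            ENNReal.ofReal ((Q * (1 + X M k ω / M))^n) ∂ℙ := by
          refine lintegral_mono_ae ?_
          filter_upwards [ae_restrict_of_ae hposk] with ω h1
          exact ENNReal.ofReal_le_ofReal ((hptf ω h1).2.2.2 k)
      _ = ∫⁻ z in (Icc l u)ᶜ, ENNReal.ofReal ((Q * (1 + z / M))^n) ∂(gammaMeasure M 1) := by
          rw [← hmap k, setLIntegral_map measurableSet_Icc.compl hgmeas (hmeas M k)]
      _ = (∫⁻ z in Iio l, ENNReal.ofReal ((Q * (1 + z / M))^n) ∂(gammaMeasure M 1)) +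
          ∫⁻ z in Ioi u, ENNReal.ofReal ((Q * (1 + z / M))^n) ∂(gammaMeasure M 1) := by
          rw [hIccc, lintegral_union measurableSet_Ioi hdisj]
      _ ≤ ENNReal.ofReal (AL * qL ε ^ M) + ENNReal.ofReal (AU * qU ε ^ M) := by
          refine add_le_add ?_ ?_
          · rw [hldef]
            exact (gamma_lower hM hεpos hε1 hQ n).trans (le_of_eq (by rw [hALdef]))
          · rw [hudef]
            exact (gamma_upper hM hεpos hQ n).trans (le_of_eq (by rw [hAUdef]))
      _ = ENNReal.ofReal (AL * qL ε ^ M + AU * qU ε ^ M) := by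
          rw [← ENNReal.ofReal_add (mul_nonneg hALpos.le (pow_nonneg (qL_pos hεpos).le M))
            (mul_nonneg hAUpos.le (pow_nonneg (qU_pos hεpos).le M))]
  have hup : ℓ ≤ ENNReal.ofReal (c + δ/2) := by
    have hgood : ∫⁻ ω in B, ENNReal.ofReal (f ω) ∂ℙ ≤ ENNReal.ofReal (c + δ/4) := by
      calc ∫⁻ ω in B, ENNReal.ofReal (f ω) ∂ℙ
          ≤ ∫⁻ _ω in B, ENNReal.ofReal (c + δ/4) ∂ℙ := by
            refine lintegral_mono_ae ?_
            filter_upwards [ae_restrict_of_ae hposk, ae_restrict_mem hB] with ω h1 hωB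
            exact ENNReal.ofReal_le_ofReal (by linarith [abs_le.mp (hfB ω h1 hωB)])
        _ = ENNReal.ofReal (c + δ/4) * ℙ B := setLIntegral_const _ _
        _ ≤ ENNReal.ofReal (c + δ/4) * 1 := mul_le_mul_right prob_le_one _
        _ = ENNReal.ofReal (c + δ/4) := mul_one _
    have hbad : ∫⁻ ω in Bᶜ, ENNReal.ofReal (f ω) ∂ℙ ≤
        ENNReal.ofReal ((K:ℝ) * (AL * qL ε ^ M + AU * qU ε ^ M)) := by
      rw [hBc]
      calc ∫⁻ ω in ⋃ k, (X M k) ⁻¹' ((Icc l u)ᶜ), ENNReal.ofReal (f ω) ∂ℙ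
          ≤ ∑' k : Fin K, ∫⁻ ω in (X M k) ⁻¹' ((Icc l u)ᶜ), ENNReal.ofReal (f ω) ∂ℙ :=
            lintegral_iUnion_le _ _
        _ = ∑ k : Fin K, ∫⁻ ω in (X M k) ⁻¹' ((Icc l u)ᶜ), ENNReal.ofReal (f ω) ∂ℙ :=
            tsum_fintype _
        _ ≤ ∑ _k : Fin K, ENNReal.ofReal (AL * qL ε ^ M + AU * qU ε ^ M) :=
            Finset.sum_le_sum fun k _ => hbadk k
        _ = (K : ℝ≥0∞) * ENNReal.ofReal (AL * qL ε ^ M + AU * qU ε ^ M) := by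
            rw [Finset.sum_const, Finset.card_univ, Fintype.card_fin, nsmul_eq_mul]
        _ = ENNReal.ofReal ((K:ℝ) * (AL * qL ε ^ M + AU * qU ε ^ M)) := by
            rw [ENNReal.ofReal_mul (by positivity), ENNReal.ofReal_natCast]
    calc ℓ = (∫⁻ ω in B, ENNReal.ofReal (f ω) ∂ℙ) +
        ∫⁻ ω in Bᶜ, ENNReal.ofReal (f ω) ∂ℙ := (lintegral_add_compl _ hB).symm
      _ ≤ ENNReal.ofReal (c + δ/4) +
          ENNReal.ofReal ((K:ℝ) * (AL * qL ε ^ M + AU * qU ε ^ M)) := add_le_add hgood hbad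
      _ ≤ ENNReal.ofReal (c + δ/4) + ENNReal.ofReal (δ/4) :=
          add_le_add_right (ENNReal.ofReal_le_ofReal hEM1) _
      _ = ENNReal.ofReal (c + δ/4 + δ/4) := by
          rw [← ENNReal.ofReal_add (by positivity) (by positivity)]
      _ = ENNReal.ofReal (c + δ/2) := by rw [show c + δ/4 + δ/4 = c + δ/2 by ring]
  have hℓtop : ℓ ≠ ⊤ := ne_top_of_le_ne_top ENNReal.ofReal_ne_top hup
  have hIle : ∫ ω, f ω ∂ℙ ≤ c + δ/2 := by
    rw [hI]
    exact ENNReal.toReal_le_of_le_ofReal (by positivity) hup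
  have hI0 : 0 ≤ ∫ ω, f ω ∂ℙ := by
    rw [hI]; exact ENNReal.toReal_nonneg
  -- lower bound
  have hdist2 : dist (∫ ω, f ω ∂ℙ) c < δ := by
    by_cases hsmall : c ≤ δ/2
    · rw [Real.dist_eq, abs_lt]
      constructor <;> linarith
    · push_neg at hsmall
      have hprobbad : ℙ Bᶜ ≤ ENNReal.ofReal ((K:ℝ) * (qL ε ^ M + qU ε ^ M)) := by
        rw [hBc]
        calc ℙ (⋃ k, (X M k) ⁻¹' ((Icc l u)ᶜ))
            ≤ ∑' k : Fin K, ℙ ((X M k) ⁻¹' ((Icc l u)ᶜ)) := measure_iUnion_le _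
          _ = ∑ k : Fin K, ℙ ((X M k) ⁻¹' ((Icc l u)ᶜ)) := tsum_fintype _
          _ ≤ ∑ _k : Fin K, ENNReal.ofReal (qL ε ^ M + qU ε ^ M) := by
              refine Finset.sum_le_sum fun k _ => ?_
              have : ℙ ((X M k) ⁻¹' ((Icc l u)ᶜ)) =
                  gammaMeasure M 1 ((Icc l u)ᶜ) := by
                rw [← Measure.map_apply (hmeas M k) measurableSet_Icc.compl, hmap k]
              rw [this, hIccc]
              calc gammaMeasure M 1 (Iio l ∪ Ioi u)
                  ≤ gammaMeasure M 1 (Iio l) + gammaMeasure M 1 (Ioi u) :=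
                    measure_union_le _ _
                _ ≤ ENNReal.ofReal (qL ε ^ M) + ENNReal.ofReal (qU ε ^ M) := by
                    refine add_le_add ?_ ?_
                    · rw [hldef]; exact gamma_Iio_le hM hεpos hε1
                    · rw [hudef]; exact gamma_Ioi_le hM hεpos
                _ = ENNReal.ofReal (qL ε ^ M + qU ε ^ M) := by
                    rw [← ENNReal.ofReal_add (pow_nonneg (qL_pos hεpos).le M)
                      (pow_nonneg (qU_pos hεpos).le M)]
          _ = (K : ℝ≥0∞) * ENNReal.ofReal (qL ε ^ M + qU ε ^ M) := by
              rw [Finset.sum_const, Finset.card_univ, Fintype.card_fin, nsmul_eq_mul]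
          _ = ENNReal.ofReal ((K:ℝ) * (qL ε ^ M + qU ε ^ M)) := by
              rw [ENNReal.ofReal_mul (by positivity), ENNReal.ofReal_natCast]
      have hprobbad' : ℙ Bᶜ ≤ ENNReal.ofReal δ' :=
        hprobbad.trans (ENNReal.ofReal_le_ofReal hEM2)
      have hδ'lt1 : δ' < 1 := by
        rw [hδ'def, div_lt_one (by positivity)]
        nlinarith
      have hPB : ENNReal.ofReal (1 - δ') ≤ ℙ B := by
        have h1 : ℙ B = 1 - ℙ Bᶜ := by
          have := prob_compl_eq_one_sub (μ := ℙ) hB.compl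
          rwa [compl_compl] at this
        rw [h1]
        refine ENNReal.le_sub_of_add_le_right (measure_ne_top _ _) ?_
        calc ENNReal.ofReal (1 - δ') + ℙ Bᶜ ≤
            ENNReal.ofReal (1 - δ') + ENNReal.ofReal δ' := by gcongr
          _ = ENNReal.ofReal 1 := by
              rw [← ENNReal.ofReal_add (by linarith) hδ'pos.le]; norm_num
          _ = 1 := ENNReal.ofReal_one
      have hcd4 : 0 < c - δ/4 := by linarith
      have hlo : ENNReal.ofReal ((c - δ/4) * (1 - δ')) ≤ ℓ := by
        calc ENNReal.ofReal ((c - δ/4) * (1 - δ'))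
            = ENNReal.ofReal (c - δ/4) * ENNReal.ofReal (1 - δ') :=
              ENNReal.ofReal_mul hcd4.le
          _ ≤ ENNReal.ofReal (c - δ/4) * ℙ B := by gcongr
          _ = ∫⁻ _ω in B, ENNReal.ofReal (c - δ/4) ∂ℙ := (setLIntegral_const _ _).symm
          _ ≤ ∫⁻ ω in B, ENNReal.ofReal (f ω) ∂ℙ := by
              refine lintegral_mono_ae ?_
              filter_upwards [ae_restrict_of_ae hposk, ae_restrict_mem hB] with ω h1 hωB
              exact ENNReal.ofReal_le_ofReal (by linarith [abs_le.mp (hfB ω h1 hωB)])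
          _ ≤ ℓ := lintegral_mono' Measure.restrict_le_self le_rfl
      have hIge : c - δ/2 ≤ ∫ ω, f ω ∂ℙ := by
        rw [hI]
        rw [← ENNReal.ofReal_le_iff_le_toReal hℓtop]
        refine le_trans ?_ hlo
        apply ENNReal.ofReal_le_ofReal
        have hδ'c : δ' * c ≤ δ/4 := by
          rw [hδ'def, div_mul_eq_mul_div, div_le_div_iff₀ (by positivity) (by norm_num)]
          nlinarith
        nlinarith [mul_nonneg hδ'pos.le hδ.le]
      rw [Real.dist_eq, abs_lt]
      constructor <;> linarith
  exact hdist2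
end
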